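/- arXiv:1306.0741 — 11 statements merged into one kernel-verified Lean document; each statement's English description precedes it below -/
import Mathlib

section
/- For every DMTS S, one has S ≡ₜ db(S), i.e. the DMTS S and the NAA db(S) have exactly the same set of LTS implementations, where db(S) = (S, S⁰, Tran) is the NAA with Tran(s) = { M a finite subset of Σ × S | for all (a, t) ∈ M, s ⤏ᵃ t, and for every N with s ⟶ N, M ∩ N ≠ ∅ }. -/
/-- A labelled transition system over alphabet `A`, with an image-finite
transition relation. -/
structure LTS (A : Type) : Type 1 where
  State : Type
  init : State
  trans : State → A → Set State
  image_finite : ∀ s a, (trans s a).Finite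
/-- A nondeterministic acceptance automaton over alphabet `A`. -/
structure NAA (A : Type) : Type 1 where
  State : Type
  init : Set State
  Tran : State → Set (Set (A × State))

namespace NAA

variable {A : Type}

/-- Modal refinement relation between two NAA. -/
def Refinement (S1 S2 : NAA A) (R : Set (S1.State × S2.State)) : Prop :=
  ∀ p ∈ R, ∀ M1 ∈ S1.Tran p.1, ∃ M2 ∈ S2.Tran p.2,
    (∀ q ∈ M1, ∃ r ∈ M2, q.1 = r.1 ∧ (q.2, r.2) ∈ R) ∧
    (∀ r ∈ M2, ∃ q ∈ M1, q.1 = r.1 ∧ (q.2, r.2) ∈ R)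

/-- `S1 ≤ₘ S2`: there is an initialised modal refinement from `S1` to `S2`. -/
def Refines (S1 S2 : NAA A) : Prop :=
  ∃ R, Refinement S1 S2 R ∧ ∀ s ∈ S1.init, ∃ t ∈ S2.init, (s, t) ∈ R

/-- `S1 ≡ₘ S2`: modal refinement in both directions. -/
def Equiv (S1 S2 : NAA A) : Prop := Refines S1 S2 ∧ Refines S2 S1

/-- The defining finiteness conditions of NAA: the set of initial states is
finite and every admissible transition set is a finite subset of `A × State`. -/
def Wellformed (S : NAA A) : Prop :=
  S.init.Finite ∧ ∀ s, ∀ M ∈ S.Tran s, M.Finite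

end NAA
/-- An (image-finite) LTS viewed as an NAA: a singleton set of initial states and
a single admissible transition set per state. -/
def LTS.toNAA {A : Type} (I : LTS A) : NAA A where
  State := I.State
  init := {I.init}
  Tran := fun s => {M | M = {p : A × I.State | p.2 ∈ I.trans s p.1}}

/-- The implementations (LTS models) of an NAA. -/
def NAA.impl {A : Type} (S : NAA A) : Set (LTS A) := {I | I.toNAA.Refines S}
/-- A disjunctive modal transition system over alphabet `A`. -/
structure DMTS (A : Type) : Type 1 where
  State : Type
  init : Set State
  may : State → A → Set State
  must : State → Set (Set (A × State))

namespace DMTS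

variable {A : Type}

/-- Modal refinement relation between two DMTS. -/
def Refinement (S1 S2 : DMTS A) (R : Set (S1.State × S2.State)) : Prop :=
  ∀ p ∈ R,
    (∀ a, ∀ t1 ∈ S1.may p.1 a, ∃ t2 ∈ S2.may p.2 a, (t1, t2) ∈ R) ∧
    (∀ N2 ∈ S2.must p.2, ∃ N1 ∈ S1.must p.1,
      ∀ q ∈ N1, ∃ t2, (q.1, t2) ∈ N2 ∧ (q.2, t2) ∈ R)

/-- `S1 ≤ₘ S2`: there is an initialised modal refinement from `S1` to `S2`. -/
def Refines (S1 S2 : DMTS A) : Prop :=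
  ∃ R, Refinement S1 S2 R ∧ ∀ s ∈ S1.init, ∃ t ∈ S2.init, (s, t) ∈ R

/-- `S1 ≡ₘ S2`: modal refinement in both directions. -/
def Equiv (S1 S2 : DMTS A) : Prop := Refines S1 S2 ∧ Refines S2 S1

/-- The defining conditions of DMTS: finitely many initial states, image-finite
may-transition relation, and every element of a must-set is a may-transition. -/
def Wellformed (S : DMTS A) : Prop :=
  S.init.Finite ∧ (∀ s a, (S.may s a).Finite) ∧
  ∀ s, ∀ N ∈ S.must s, ∀ p ∈ N, p.2 ∈ S.may s p.1

end DMTS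
/-- An (image-finite) LTS viewed as a DMTS: a singleton set of initial states and
a singleton must-set for each transition. -/
def LTS.toDMTS {A : Type} (I : LTS A) : DMTS A where
  State := I.State
  init := {I.init}
  may := I.trans
  must := fun s => {N | ∃ a, ∃ t ∈ I.trans s a, N = {(a, t)}}

/-- The implementations (LTS models) of a DMTS. -/
def DMTS.impl {A : Type} (S : DMTS A) : Set (LTS A) := {I | I.toDMTS.Refines S}

/-- The translation `db` from DMTS to NAA: `Tran s` consists of all finite sets
`M ⊆ A × State` of allowed transitions such that every element of `M` is a
may-transition and `M` meets every must-set of `s`. -/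
def DMTS.db {A : Type} (S : DMTS A) : NAA A where
  State := S.State
  init := S.init
  Tran := fun s => {M | M.Finite ∧ (∀ p ∈ M, p.2 ∈ S.may s p.1) ∧
    ∀ N ∈ S.must s, (M ∩ N).Nonempty}

/-- every DMTS `S` has exactly the same LTS implementations as the
NAA `db S`. -/
theorem statement2 (A : Type) [Fintype A] (S : DMTS A) (hS : S.Wellformed) :
    S.impl = S.db.impl := by
  ext I
  simp only [DMTS.impl, NAA.impl, Set.mem_setOf_eq]
  constructor
  · rintro ⟨R, hR, hinit⟩
    refine ⟨R, ?_, hinit⟩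
    rintro ⟨s1, s2⟩ hp M1 hM1
    simp only [LTS.toNAA, Set.mem_setOf_eq] at hM1
    obtain ⟨hmay, hmust⟩ := hR _ hp
    refine ⟨{q : A × S.State | q.2 ∈ S.may s2 q.1 ∧ ∃ t1 ∈ I.trans s1 q.1, (t1, q.2) ∈ R},
      ⟨?_, fun p hp' => hp'.1, ?_⟩, ?_, ?_⟩
    · refine Set.Finite.subset (Set.finite_iUnion
        (fun a : A => (hS.2.1 s2 a).image (Prod.mk a))) ?_
      rintro ⟨a, t⟩ ⟨ht, -⟩
      exact Set.mem_iUnion.2 ⟨a, ⟨t, ht, rfl⟩⟩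
    · intro N hN
      obtain ⟨N1, hN1, hmatch⟩ := hmust N hN
      simp only [LTS.toDMTS, Set.mem_setOf_eq] at hN1
      obtain ⟨a, t1, ht1, rfl⟩ := hN1
      obtain ⟨t2, ht2N, ht2R⟩ := hmatch (a, t1) rfl
      exact ⟨(a, t2), ⟨hS.2.2 s2 N hN (a, t2) ht2N, t1, ht1, ht2R⟩, ht2N⟩
    · rintro ⟨a, t1⟩ hq
      rw [hM1] at hq
      obtain ⟨t2, ht2, hR2⟩ := hmay a t1 hq
      exact ⟨(a, t2), ⟨ht2, t1, hq, hR2⟩, rfl, hR2⟩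
    · rintro ⟨a, t2⟩ ⟨-, t1, ht1, hR1⟩
      refine ⟨(a, t1), ?_, rfl, hR1⟩
      rw [hM1]; exact ht1
  · rintro ⟨R, hR, hinit⟩
    refine ⟨R, ?_, hinit⟩
    rintro ⟨s1, s2⟩ hp
    obtain ⟨M2, hM2, hfwd, hbwd⟩ := hR _ hp {p : A × I.State | p.2 ∈ I.trans s1 p.1} rfl
    obtain ⟨-, hmay2, hmust2⟩ := hM2
    constructor
    · intro a t1 ht1
      obtain ⟨⟨a', t2⟩, hmem, heq, hR2⟩ := hfwd (a, t1) ht1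
      cases heq
      exact ⟨t2, hmay2 _ hmem, hR2⟩
    · intro N2 hN2
      obtain ⟨⟨a, t2⟩, h2M, h2N⟩ := hmust2 N2 hN2
      obtain ⟨⟨a', t1⟩, ht1, heq, hR1⟩ := hbwd (a, t2) h2M
      cases heq
      refine ⟨{(a, t1)}, ⟨a, t1, ht1, rfl⟩, ?_⟩
      rintro q hq
      cases hq
      exact ⟨t2, h2N, hR1⟩
end

section
/- For every NAA S, one has S ≡ₜ bd(S), i.e. the NAA S and the DMTS bd(S) have exactly the same set of LTS implementations, where bd(S) = (T, T⁰, ⤏, ⟶) is the DMTS with T = { M | M ∈ Tran(s) for some s ∈ S }, T⁰ = { M ∈ Tran(s⁰) | s⁰ ∈ S⁰ }, ⟶ = { (M, {(a, M′) | M′ ∈ Tran(s′)}) | (a, s′) ∈ M }, and ⤏ = { (t, a, t′) | t ∈ T and there is (t, N) ∈ ⟶ with (a, t′) ∈ N }. -/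
/-- The translation `bd` from NAA to DMTS: states are the admissible transition
sets `M ∈ Tran s` of the NAA; initial states are the admissible sets of initial
NAA states; for each `(a, s') ∈ M` there is a must-set `{(a, M') | M' ∈ Tran s'}`;
and the may-transitions are those underlying some must-set. -/
def NAA.bd {A : Type} (S : NAA A) : DMTS A where
  State := {M : Set (A × S.State) // ∃ s, M ∈ S.Tran s}
  init := {M | ∃ s ∈ S.init, M.1 ∈ S.Tran s}
  may := fun M a => {M' | ∃ p ∈ M.1, p.1 = a ∧ M'.1 ∈ S.Tran p.2}
  must := fun M => {N | ∃ p ∈ M.1,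
    N = {q : A × {M : Set (A × S.State) // ∃ s, M ∈ S.Tran s} |
      q.1 = p.1 ∧ q.2.1 ∈ S.Tran p.2}}

/-- every NAA `S` has exactly the same LTS implementations as the
DMTS `bd S`. -/
theorem statement3 (A : Type) [Fintype A] (S : NAA A) (hS : S.Wellformed) :
    S.impl = S.bd.impl := by
  ext I
  simp only [NAA.impl, DMTS.impl, Set.mem_setOf_eq]
  constructor
  · rintro ⟨R, hR, hinit⟩
    -- R' relates an LTS state i to a bd-state M when they "match"
    set R' : Set (I.State × S.bd.State) :=
      {p | (∀ a, ∀ t ∈ I.trans p.1 a, ∃ q ∈ p.2.1, q.1 = a ∧ (t, q.2) ∈ R) ∧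
        (∀ q ∈ p.2.1, ∃ t ∈ I.trans p.1 q.1, (t, q.2) ∈ R)} with hR'def
    -- key step: from (t, s) ∈ R obtain a bd-state related to t in R'
    have key : ∀ t s, (t, s) ∈ R → ∃ M2, ∃ h : M2 ∈ S.Tran s,
        (t, (⟨M2, s, h⟩ : S.bd.State)) ∈ R' := by
      intro t s hts
      obtain ⟨M2, hM2, hf, hb⟩ := hR (t, s) hts
        {p : A × I.State | p.2 ∈ I.trans t p.1} rfl
      refine ⟨M2, hM2, ?_, ?_⟩
      · intro a t' ht'
        obtain ⟨r, hr, hra, hrR⟩ := hf (a, t') ht'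
        exact ⟨r, hr, hra.symm, hrR⟩
      · intro q hq
        obtain ⟨q', hq', hq'1, hq'R⟩ := hb q hq
        refine ⟨q'.2, ?_, hq'R⟩
        rw [← hq'1]
        exact hq'
    refine ⟨R', ?_, ?_⟩
    · rintro ⟨i, M⟩ ⟨h1, h2⟩
      constructor
      · intro a t ht
        obtain ⟨q, hq, hqa, hqR⟩ := h1 a t ht
        obtain ⟨M2, hM2, hM2R⟩ := key t q.2 hqR
        exact ⟨⟨M2, q.2, hM2⟩, ⟨q, hq, hqa, hM2⟩, hM2R⟩
      · rintro N2 ⟨p, hp, rfl⟩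
        obtain ⟨t, htt, htR⟩ := h2 p hp
        refine ⟨{(p.1, t)}, ⟨p.1, t, htt, rfl⟩, ?_⟩
        rintro q hq
        replace hq : q = (p.1, t) := hq
        subst hq
        obtain ⟨M2, hM2, hM2R⟩ := key t p.2 htR
        exact ⟨⟨M2, p.2, hM2⟩, ⟨rfl, hM2⟩, hM2R⟩
    · intro s hs
      replace hs : s = I.init := hs
      subst hs
      obtain ⟨s0, hs0, hsR⟩ := hinit I.init rfl
      obtain ⟨M, hM, hMR⟩ := key I.init s0 hsR
      exact ⟨⟨M, s0, hM⟩, ⟨s0, hs0, hM⟩, hMR⟩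
  · rintro ⟨R', hR', hinit⟩
    set R : Set (I.State × S.State) :=
      {p | ∃ M, ∃ h : M ∈ S.Tran p.2, (p.1, (⟨M, p.2, h⟩ : S.bd.State)) ∈ R'} with hRdef
    refine ⟨R, ?_, ?_⟩
    · rintro ⟨i, s⟩ ⟨M, hM, hMR'⟩ M1 hM1
      obtain rfl : M1 = {p : A × I.State | p.2 ∈ I.trans i p.1} := hM1
      obtain ⟨hmay, hmust⟩ := hR' (i, ⟨M, s, hM⟩) hMR'
      refine ⟨M, hM, ?_, ?_⟩
      · rintro q hq
        obtain ⟨M', hM'mem, hM'R⟩ := hmay q.1 q.2 hq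
        obtain ⟨p, hp, hpa, hpT⟩ := hM'mem
        refine ⟨p, hp, hpa.symm, M'.1, hpT, ?_⟩
        have : (⟨M'.1, p.2, hpT⟩ : S.bd.State) = M' := Subtype.ext rfl
        rw [this]
        exact hM'R
      · rintro r hr
        obtain ⟨N1, hN1, hN1match⟩ := hmust
          {q : A × S.bd.State | q.1 = r.1 ∧ q.2.1 ∈ S.Tran r.2} ⟨r, hr, rfl⟩
        obtain ⟨a, t, htt, rfl⟩ := hN1
        obtain ⟨t2, ⟨ht2a, ht2T⟩, ht2R⟩ := hN1match (a, t) rfl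
        refine ⟨(a, t), htt, ht2a, t2.1, ht2T, ?_⟩
        have : (⟨t2.1, r.2, ht2T⟩ : S.bd.State) = t2 := Subtype.ext rfl
        rw [this]
        exact ht2R
    · intro s hs
      replace hs : s = I.init := hs
      subst hs
      obtain ⟨M, ⟨s0, hs0, hMT⟩, hMR⟩ := hinit I.init rfl
      refine ⟨s0, hs0, M.1, hMT, ?_⟩
      have : (⟨M.1, s0, hMT⟩ : S.bd.State) = M := Subtype.ext rfl
      rw [this]
      exact hMR
end

section
/- For every finite NAA S = (S, S⁰, Tran), one has S ≡ₜ bh(S): an LTS implements the NAA S if and only if it models the νHML formula bh(S) = (S, S⁰, Δ_Tran), where the variables are the states of S and Δ_Tran(s) = ⋁_{M ∈ Tran(s)} ( ⋀_{(a,t) ∈ M} ⟨a⟩t ∧ ⋀_{a ∈ Σ} [a] ( ⋁_{u ∈ M_a} u ) ), with M_a = { t | (a, t) ∈ M }. -/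
/-- Hennessy-Milner logic formulae over alphabet `A` and variables `X`. -/
inductive HML (A X : Type) : Type
  | tt : HML A X
  | ff : HML A X
  | var : X → HML A X
  | and : HML A X → HML A X → HML A X
  | or : HML A X → HML A X → HML A X
  | dia : A → HML A X → HML A X
  | box : A → HML A X → HML A X

/-- Semantics of an HML formula over an LTS `I`, relative to an assignment `σ`. -/
def HML.sem {A X : Type} (I : LTS A) (σ : X → Set I.State) : HML A X → Set I.State
  | .tt => Set.univ
  | .ff => ∅
  | .var x => σ x
  | .and φ ψ => HML.sem I σ φ ∩ HML.sem I σ ψ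
  | .or φ ψ => HML.sem I σ φ ∪ HML.sem I σ ψ
  | .dia a φ => {s | ∃ t ∈ I.trans s a, t ∈ HML.sem I σ φ}
  | .box a φ => {s | ∀ t ∈ I.trans s a, t ∈ HML.sem I σ φ}

/-- An (initialised) νHML formula: variables, initial variables and a declaration. -/
structure NuHML (A : Type) : Type 1 where
  Var : Type
  init : Set Var
  decl : Var → HML A Var

/-- Greatest-fixed-point semantics of a declaration over an LTS `I`: the union of
all assignments `σ` with `σ x ⊆ ⟦Δ(x)⟧σ` for all `x`. -/
def NuHML.declSem {A : Type} (Δ : NuHML A) (I : LTS A) : Δ.Var → Set I.State :=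
  fun x => {s | ∃ σ : Δ.Var → Set I.State,
    (∀ y, σ y ⊆ HML.sem I σ (Δ.decl y)) ∧ s ∈ σ x}

/-- The set of LTS models of a νHML formula. -/
def NuHML.models {A : Type} (Δ : NuHML A) : Set (LTS A) :=
  {I | ∃ x0 ∈ Δ.init, I.init ∈ Δ.declSem I x0}

/-- Finite disjunction of HML formulae (the empty disjunction is `ff`). -/
def bigOr {A X : Type} (l : List (HML A X)) : HML A X := l.foldr HML.or HML.ff

/-- Finite conjunction of HML formulae (the empty conjunction is `tt`). -/
def bigAnd {A X : Type} (l : List (HML A X)) : HML A X := l.foldr HML.and HML.tt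

/-- The translation `bh` from finite NAA to νHML: variables are the states, and
`Δ_Tran s = ⋁_{M ∈ Tran s} (⋀_{(a,t) ∈ M} ⟨a⟩t ∧ ⋀_{a ∈ Σ} [a] (⋁_{u ∈ M_a} u))`. -/
noncomputable def NAA.bh {A : Type} [Fintype A] (S : NAA A) [Finite S.State] :
    NuHML A where
  Var := S.State
  init := S.init
  decl := fun s => bigOr ((S.Tran s).toFinite.toFinset.toList.map (fun M =>
    HML.and
      (bigAnd (M.toFinite.toFinset.toList.map (fun p => HML.dia p.1 (HML.var p.2))))
      (bigAnd ((Finset.univ : Finset A).toList.map (fun a =>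
        HML.box a (bigOr (({u | (a, u) ∈ M} : Set S.State).toFinite.toFinset.toList.map
          (fun u => HML.var u))))))))

lemma sem_bigOr {A X : Type} (I : LTS A) (σ : X → Set I.State)
    (l : List (HML A X)) (s : I.State) :
    s ∈ HML.sem I σ (bigOr l) ↔ ∃ φ ∈ l, s ∈ HML.sem I σ φ := by
  induction l with
  | nil => simp [bigOr, HML.sem]
  | cons h t ih =>
    simp only [bigOr, List.foldr_cons] at *
    simp [HML.sem, ih]

lemma sem_bigAnd {A X : Type} (I : LTS A) (σ : X → Set I.State)
    (l : List (HML A X)) (s : I.State) :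
    s ∈ HML.sem I σ (bigAnd l) ↔ ∀ φ ∈ l, s ∈ HML.sem I σ φ := by
  induction l with
  | nil => simp [bigAnd, HML.sem]
  | cons h t ih =>
    simp only [bigAnd, List.foldr_cons] at *
    simp [HML.sem, ih]

lemma mem_sem_decl {A : Type} [Fintype A] (S : NAA A) [Finite S.State]
    (I : LTS A) (σ : S.State → Set I.State) (y : S.State) (s : I.State) :
    s ∈ HML.sem I σ (S.bh.decl y) ↔ ∃ M ∈ S.Tran y,
      (∀ p ∈ M, ∃ t ∈ I.trans s p.1, t ∈ σ p.2) ∧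
      (∀ a : A, ∀ t ∈ I.trans s a, ∃ u, (a, u) ∈ M ∧ t ∈ σ u) := by
  simp only [NAA.bh, sem_bigOr, List.mem_map, Finset.mem_toList,
    Set.Finite.mem_toFinset]
  constructor
  · rintro ⟨φ, ⟨M, hM, rfl⟩, hs⟩
    refine ⟨M, hM, ?_, ?_⟩
    · have h1 := hs.1
      rw [sem_bigAnd] at h1
      intro p hp
      have := h1 _ (List.mem_map.mpr ⟨p, by simpa using hp, rfl⟩)
      simpa [HML.sem] using this
    · have h2 := hs.2
      rw [sem_bigAnd] at h2
      intro a t ht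
      have := h2 _ (List.mem_map.mpr ⟨a, by simp, rfl⟩)
      simp only [HML.sem, Set.mem_setOf_eq] at this
      have := this t ht
      rw [sem_bigOr] at this
      simp only [List.mem_map] at this
      obtain ⟨ψ, ⟨u, hu, rfl⟩, hψ⟩ := this
      exact ⟨u, by simpa using hu, hψ⟩
  · rintro ⟨M, hM, h1, h2⟩
    refine ⟨_, ⟨M, hM, rfl⟩, ?_, ?_⟩
    · rw [sem_bigAnd]
      intro φ hφ
      rw [List.mem_map] at hφ
      obtain ⟨p, hp, rfl⟩ := hφ
      simp only [Finset.mem_toList, Set.Finite.mem_toFinset] at hp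
      simpa [HML.sem] using h1 p hp
    · rw [sem_bigAnd]
      intro φ hφ
      rw [List.mem_map] at hφ
      obtain ⟨a, _, rfl⟩ := hφ
      simp only [HML.sem, Set.mem_setOf_eq]
      intro t ht
      obtain ⟨u, hu, htu⟩ := h2 a t ht
      rw [sem_bigOr]
      exact ⟨_, List.mem_map.mpr ⟨u, by simpa using hu, rfl⟩, htu⟩

/-- a finite NAA `S` has exactly the same LTS implementations as
the models of the νHML formula `bh S`. -/
theorem statement4 (A : Type) [Fintype A] (S : NAA A) [Finite S.State] :
    S.impl = S.bh.models := by
  ext I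
  simp only [NAA.impl, Set.mem_setOf_eq, NuHML.models, NAA.Refines, NuHML.declSem]
  constructor
  · rintro ⟨R, hR, hinit⟩
    obtain ⟨t, ht, hIt⟩ := hinit I.init (Set.mem_singleton _)
    refine ⟨t, ht, fun x => {s | (s, x) ∈ R}, ?_, hIt⟩
    intro y s hs
    refine (mem_sem_decl S I _ y s).mpr ?_
    obtain ⟨M2, hM2, hc1, hc2⟩ := hR (s, y) hs
      {p : A × I.State | p.2 ∈ I.trans s p.1} rfl
    refine ⟨M2, hM2, ?_, ?_⟩
    · intro p hp
      obtain ⟨q, hq, hq1, hq2⟩ := hc2 p hp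
      exact ⟨q.2, hq1 ▸ hq, hq2⟩
    · intro a u hu
      obtain ⟨r, hr, hr1, hr2⟩ := hc1 (a, u) hu
      exact ⟨r.2, by rwa [show r = (a, r.2) from Prod.ext hr1.symm rfl] at hr, hr2⟩
  · rintro ⟨x0, hx0, σ, hσ, hIx⟩
    refine ⟨{p | p.1 ∈ σ p.2}, ?_, ?_⟩
    · rintro ⟨s, y⟩ hs M1 hM1
      simp only [LTS.toNAA, Set.mem_setOf_eq] at hM1
      subst hM1
      have := hσ y hs
      replace this := (mem_sem_decl S I σ y s).mp this
      obtain ⟨M2, hM2, h1, h2⟩ := this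
      refine ⟨M2, hM2, ?_, ?_⟩
      · intro q hq
        have hq' : q.2 ∈ I.trans s q.1 := hq
        obtain ⟨u, hu, htu⟩ := h2 q.1 q.2 hq'
        exact ⟨(q.1, u), hu, rfl, htu⟩
      · intro r hr
        obtain ⟨t', ht', htσ⟩ := h1 r hr
        exact ⟨(r.1, t'), ht', rfl, htσ⟩
    · intro s hs
      have : s = I.init := hs
      exact ⟨x0, hx0, by subst this; exact hIx⟩
end

section
/- For all NAA S₁, S₂, S₃ over Σ: ⟦S₁ ∨ S₂⟧ = ⟦S₁⟧ ∪ ⟦S₂⟧, and moreover S₁ ∨ S₂ ≤ₘ S₃ if and only if S₁ ≤ₘ S₃ and S₂ ≤ₘ S₃, where the disjunction of NAA (S₁, S⁰₁, Tran₁) and (S₂, S⁰₂, Tran₂) (with disjoint state sets) is S₁ ∨ S₂ = (S₁ ∪ S₂, S⁰₁ ∪ S⁰₂, Tran₁ ∪ Tran₂). -/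
/-- Disjunction of two NAA: the componentwise (disjoint) union. -/
def NAA.disj {A : Type} (S1 S2 : NAA A) : NAA A where
  State := S1.State ⊕ S2.State
  init := Sum.inl '' S1.init ∪ Sum.inr '' S2.init
  Tran := fun s => match s with
    | Sum.inl s1 => {M | ∃ M1 ∈ S1.Tran s1,
        M = (fun p : A × S1.State =>
          ((p.1, Sum.inl p.2) : A × (S1.State ⊕ S2.State))) '' M1}
    | Sum.inr s2 => {M | ∃ M2 ∈ S2.Tran s2,
        M = (fun p : A × S2.State =>
          ((p.1, Sum.inr p.2) : A × (S1.State ⊕ S2.State))) '' M2}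

namespace NAAaux
open NAA
variable {A : Type}

/-- lifting a refinement into the left of a disjunction -/
lemma refines_disj_inl (T S1 S2 : NAA A) (h : T.Refines S1) :
    T.Refines (S1.disj S2) := by
  obtain ⟨R, hR, hi⟩ := h
  refine ⟨{p | ∃ s, p.2 = Sum.inl s ∧ (p.1, s) ∈ R}, ?_, ?_⟩
  · rintro ⟨t, u⟩ ⟨s, hs, hps⟩ M1 hM1
    subst hs
    obtain ⟨M2, hM2, hfw, hbw⟩ := hR (t, s) hps M1 hM1
    refine ⟨(fun p : A × S1.State => ((p.1, Sum.inl p.2) : A × (S1.State ⊕ S2.State))) '' M2,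
      ⟨M2, hM2, rfl⟩, ?_, ?_⟩
    · rintro q hq
      obtain ⟨r, hr, h1, h2⟩ := hfw q hq
      exact ⟨(r.1, Sum.inl r.2), ⟨r, hr, rfl⟩, h1, r.2, rfl, h2⟩
    · rintro r ⟨x, hx, rfl⟩
      obtain ⟨q, hq, h1, h2⟩ := hbw x hx
      exact ⟨q, hq, h1, x.2, rfl, h2⟩
  · intro s hs
    obtain ⟨t, ht, hst⟩ := hi s hs
    exact ⟨Sum.inl t, Or.inl ⟨t, ht, rfl⟩, t, rfl, hst⟩

lemma refines_disj_inr (T S1 S2 : NAA A) (h : T.Refines S2) :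
    T.Refines (S1.disj S2) := by
  obtain ⟨R, hR, hi⟩ := h
  refine ⟨{p | ∃ s, p.2 = Sum.inr s ∧ (p.1, s) ∈ R}, ?_, ?_⟩
  · rintro ⟨t, u⟩ ⟨s, hs, hps⟩ M1 hM1
    subst hs
    obtain ⟨M2, hM2, hfw, hbw⟩ := hR (t, s) hps M1 hM1
    refine ⟨(fun p : A × S2.State => ((p.1, Sum.inr p.2) : A × (S1.State ⊕ S2.State))) '' M2,
      ⟨M2, hM2, rfl⟩, ?_, ?_⟩
    · rintro q hq
      obtain ⟨r, hr, h1, h2⟩ := hfw q hq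
      exact ⟨(r.1, Sum.inr r.2), ⟨r, hr, rfl⟩, h1, r.2, rfl, h2⟩
    · rintro r ⟨x, hx, rfl⟩
      obtain ⟨q, hq, h1, h2⟩ := hbw x hx
      exact ⟨q, hq, h1, x.2, rfl, h2⟩
  · intro s hs
    obtain ⟨t, ht, hst⟩ := hi s hs
    exact ⟨Sum.inr t, Or.inr ⟨t, ht, rfl⟩, t, rfl, hst⟩

/-- extracting left refinement (as Refinement only) from T ≤ disj -/
lemma refinement_extract_inl (T S1 S2 : NAA A) (R : Set (T.State × (S1.disj S2).State))
    (hR : T.Refinement (S1.disj S2) R) :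
    T.Refinement S1 {p | (p.1, Sum.inl p.2) ∈ R} := by
  rintro ⟨t, s⟩ hp M1 hM1
  obtain ⟨M, hM, hfw, hbw⟩ := hR (t, Sum.inl s) hp M1 hM1
  obtain ⟨M2, hM2, rfl⟩ := hM
  refine ⟨M2, hM2, ?_, ?_⟩
  · intro q hq
    obtain ⟨r, ⟨x, hx, rfl⟩, h1, h2⟩ := hfw q hq
    exact ⟨x, hx, h1, h2⟩
  · intro x hx
    obtain ⟨q, hq, h1, h2⟩ := hbw (x.1, Sum.inl x.2) ⟨x, hx, rfl⟩
    exact ⟨q, hq, h1, h2⟩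

lemma refinement_extract_inr (T S1 S2 : NAA A) (R : Set (T.State × (S1.disj S2).State))
    (hR : T.Refinement (S1.disj S2) R) :
    T.Refinement S2 {p | (p.1, Sum.inr p.2) ∈ R} := by
  rintro ⟨t, s⟩ hp M1 hM1
  obtain ⟨M, hM, hfw, hbw⟩ := hR (t, Sum.inr s) hp M1 hM1
  obtain ⟨M2, hM2, rfl⟩ := hM
  refine ⟨M2, hM2, ?_, ?_⟩
  · intro q hq
    obtain ⟨r, ⟨x, hx, rfl⟩, h1, h2⟩ := hfw q hq
    exact ⟨x, hx, h1, h2⟩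
  · intro x hx
    obtain ⟨q, hq, h1, h2⟩ := hbw (x.1, Sum.inr x.2) ⟨x, hx, rfl⟩
    exact ⟨q, hq, h1, h2⟩

lemma disj_refines_iff (S1 S2 S3 : NAA A) :
    (S1.disj S2).Refines S3 ↔ S1.Refines S3 ∧ S2.Refines S3 := by
  constructor
  · rintro ⟨R, hR, hi⟩
    constructor
    · refine ⟨{p | (Sum.inl p.1, p.2) ∈ R}, ?_, ?_⟩
      · rintro ⟨s, u⟩ hp M1 hM1
        obtain ⟨M2, hM2, hfw, hbw⟩ := hR (Sum.inl s, u) hp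
          ((fun p : A × S1.State => ((p.1, Sum.inl p.2) : A × (S1.State ⊕ S2.State))) '' M1)
          ⟨M1, hM1, rfl⟩
        refine ⟨M2, hM2, ?_, ?_⟩
        · intro q hq
          obtain ⟨r, hr, h1, h2⟩ := hfw (q.1, Sum.inl q.2) ⟨q, hq, rfl⟩
          exact ⟨r, hr, h1, h2⟩
        · intro r hr
          obtain ⟨q, ⟨x, hx, rfl⟩, h1, h2⟩ := hbw r hr
          exact ⟨x, hx, h1, h2⟩
      · intro s hs
        exact hi (Sum.inl s) (Or.inl ⟨s, hs, rfl⟩)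
    · refine ⟨{p | (Sum.inr p.1, p.2) ∈ R}, ?_, ?_⟩
      · rintro ⟨s, u⟩ hp M1 hM1
        obtain ⟨M2, hM2, hfw, hbw⟩ := hR (Sum.inr s, u) hp
          ((fun p : A × S2.State => ((p.1, Sum.inr p.2) : A × (S1.State ⊕ S2.State))) '' M1)
          ⟨M1, hM1, rfl⟩
        refine ⟨M2, hM2, ?_, ?_⟩
        · intro q hq
          obtain ⟨r, hr, h1, h2⟩ := hfw (q.1, Sum.inr q.2) ⟨q, hq, rfl⟩
          exact ⟨r, hr, h1, h2⟩
        · intro r hr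
          obtain ⟨q, ⟨x, hx, rfl⟩, h1, h2⟩ := hbw r hr
          exact ⟨x, hx, h1, h2⟩
      · intro s hs
        exact hi (Sum.inr s) (Or.inr ⟨s, hs, rfl⟩)
  · rintro ⟨⟨R1, hR1, hi1⟩, ⟨R2, hR2, hi2⟩⟩
    refine ⟨{p | (∃ s, p.1 = Sum.inl s ∧ (s, p.2) ∈ R1) ∨
                 (∃ s, p.1 = Sum.inr s ∧ (s, p.2) ∈ R2)}, ?_, ?_⟩
    · rintro ⟨t, u⟩ (⟨s, hs, hps⟩ | ⟨s, hs, hps⟩) M hM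
      · subst hs
        obtain ⟨M1, hM1, rfl⟩ := hM
        obtain ⟨M2, hM2, hfw, hbw⟩ := hR1 (s, u) hps M1 hM1
        refine ⟨M2, hM2, ?_, ?_⟩
        · rintro q ⟨x, hx, rfl⟩
          obtain ⟨r, hr, hh1, hh2⟩ := hfw x hx
          exact ⟨r, hr, hh1, Or.inl ⟨x.2, rfl, hh2⟩⟩
        · intro r hr
          obtain ⟨q, hq, hh1, hh2⟩ := hbw r hr
          exact ⟨(q.1, Sum.inl q.2), ⟨q, hq, rfl⟩, hh1, Or.inl ⟨q.2, rfl, hh2⟩⟩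
      · subst hs
        obtain ⟨M1, hM1, rfl⟩ := hM
        obtain ⟨M2, hM2, hfw, hbw⟩ := hR2 (s, u) hps M1 hM1
        refine ⟨M2, hM2, ?_, ?_⟩
        · rintro q ⟨x, hx, rfl⟩
          obtain ⟨r, hr, hh1, hh2⟩ := hfw x hx
          exact ⟨r, hr, hh1, Or.inr ⟨x.2, rfl, hh2⟩⟩
        · intro r hr
          obtain ⟨q, hq, hh1, hh2⟩ := hbw r hr
          exact ⟨(q.1, Sum.inr q.2), ⟨q, hq, rfl⟩, hh1, Or.inr ⟨q.2, rfl, hh2⟩⟩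
    · rintro s (⟨x, hx, rfl⟩ | ⟨x, hx, rfl⟩)
      · obtain ⟨t, ht, hxt⟩ := hi1 x hx
        exact ⟨t, ht, Or.inl ⟨x, rfl, hxt⟩⟩
      · obtain ⟨t, ht, hxt⟩ := hi2 x hx
        exact ⟨t, ht, Or.inr ⟨x, rfl, hxt⟩⟩

lemma impl_disj (S1 S2 : NAA A) : (S1.disj S2).impl = S1.impl ∪ S2.impl := by
  ext I
  simp only [NAA.impl, Set.mem_setOf_eq, Set.mem_union]
  constructor
  · rintro ⟨R, hR, hi⟩
    obtain ⟨t, ht, hit⟩ := hi I.init rfl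
    rcases ht with ⟨t1, ht1, rfl⟩ | ⟨t2, ht2, rfl⟩
    · left
      refine ⟨{p | (p.1, Sum.inl p.2) ∈ R}, refinement_extract_inl _ _ _ R hR, ?_⟩
      rintro s rfl
      exact ⟨t1, ht1, hit⟩
    · right
      refine ⟨{p | (p.1, Sum.inr p.2) ∈ R}, refinement_extract_inr _ _ _ R hR, ?_⟩
      rintro s rfl
      exact ⟨t2, ht2, hit⟩
  · rintro (h | h)
    · exact refines_disj_inl _ _ _ h
    · exact refines_disj_inr _ _ _ h

end NAAaux

/-- the implementations of a disjunction of NAA are the union of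
the implementations, and disjunction is the least upper bound with respect to
modal refinement. -/
theorem statement7 (A : Type) [Fintype A] (S1 S2 S3 : NAA A)
    (h1 : S1.Wellformed) (h2 : S2.Wellformed) (h3 : S3.Wellformed) :
    (S1.disj S2).impl = S1.impl ∪ S2.impl ∧
    ((S1.disj S2).Refines S3 ↔ S1.Refines S3 ∧ S2.Refines S3) :=
  ⟨NAAaux.impl_disj S1 S2, NAAaux.disj_refines_iff S1 S2 S3⟩
end

section
/- For all DMTS S₁ and S₂, the translation to NAA commutes with conjunction up to syntactic equality: db(S₁ ∧ S₂) = db(S₁) ∧ db(S₂), i.e. both NAA have the same state set S₁ × S₂, the same initial states S⁰₁ × S⁰₂, and identical transition-constraint functions. -/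
/-- Conjunction of two DMTS: may-transitions are synchronised, and every
must-set of either component induces a must-set of synchronised pairs. -/
def DMTS.conj {A : Type} (S1 S2 : DMTS A) : DMTS A where
  State := S1.State × S2.State
  init := S1.init ×ˢ S2.init
  may := fun s a => (S1.may s.1 a) ×ˢ (S2.may s.2 a)
  must := fun s => {N |
    (∃ N1 ∈ S1.must s.1, N = {q : A × (S1.State × S2.State) |
      (q.1, q.2.1) ∈ N1 ∧ q.2.1 ∈ S1.may s.1 q.1 ∧ q.2.2 ∈ S2.may s.2 q.1}) ∨
    (∃ N2 ∈ S2.must s.2, N = {q : A × (S1.State × S2.State) |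
      (q.1, q.2.2) ∈ N2 ∧ q.2.1 ∈ S1.may s.1 q.1 ∧ q.2.2 ∈ S2.may s.2 q.1})}

/-- Projection of a set of triples `(a, s1, s2)` to the pairs `(a, s1)`. -/
def NAA.pi1 {A S1 S2 : Type} (M : Set (A × (S1 × S2))) : Set (A × S1) :=
  {q | ∃ s2, (q.1, (q.2, s2)) ∈ M}

/-- Projection of a set of triples `(a, s1, s2)` to the pairs `(a, s2)`. -/
def NAA.pi2 {A S1 S2 : Type} (M : Set (A × (S1 × S2))) : Set (A × S2) :=
  {q | ∃ s1, (q.1, (s1, q.2)) ∈ M}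

/-- Conjunction of two NAA: the admissible transition sets over the product of
the state spaces are those whose two projections are admissible. -/
def NAA.conj {A : Type} (S1 S2 : NAA A) : NAA A where
  State := S1.State × S2.State
  init := S1.init ×ˢ S2.init
  Tran := fun s => {M | M.Finite ∧ NAA.pi1 M ∈ S1.Tran s.1 ∧ NAA.pi2 M ∈ S2.Tran s.2}

/-- the translation from DMTS to NAA commutes with conjunction up
to syntactic equality: `db (S1 ∧ S2) = db S1 ∧ db S2` (same state set, same
initial states, identical transition-constraint functions). -/
theorem statement10 (A : Type) [Fintype A] (S1 S2 : DMTS A)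
    (h1 : S1.Wellformed) (h2 : S2.Wellformed) :
    (S1.conj S2).db = (S1.db).conj (S2.db) := by

  have hpi1 : ∀ (M : Set (A × (S1.State × S2.State))),
      NAA.pi1 M = (fun p : A × (S1.State × S2.State) => (p.1, p.2.1)) '' M := by
    intro M
    ext ⟨a, t1⟩
    constructor
    · rintro ⟨s2, hm⟩; exact ⟨(a, (t1, s2)), hm, rfl⟩
    · rintro ⟨⟨b, ⟨u1, u2⟩⟩, hm, heq⟩
      cases heq
      exact ⟨u2, hm⟩
  have hpi2 : ∀ (M : Set (A × (S1.State × S2.State))),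
      NAA.pi2 M = (fun p : A × (S1.State × S2.State) => (p.1, p.2.2)) '' M := by
    intro M
    ext ⟨a, t2⟩
    constructor
    · rintro ⟨s1, hm⟩; exact ⟨(a, (s1, t2)), hm, rfl⟩
    · rintro ⟨⟨b, ⟨u1, u2⟩⟩, hm, heq⟩
      cases heq
      exact ⟨u1, hm⟩
  show NAA.mk (S1.State × S2.State) (S1.init ×ˢ S2.init) _
      = NAA.mk (S1.State × S2.State) (S1.init ×ˢ S2.init) _
  congr 1
  funext s
  ext M
  simp only [DMTS.db, DMTS.conj, NAA.conj, Set.mem_setOf_eq]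
  constructor
  · rintro ⟨hfin, hmay, hmust⟩
    refine ⟨hfin, ⟨?_, ?_, ?_⟩, ?_, ?_, ?_⟩
    · exact (congrArg Set.Finite (hpi1 M)).mpr (hfin.image _)
    · rintro ⟨a, t1⟩ ⟨s2, hm⟩
      exact (hmay _ hm).1
    · intro N1 hN1
      obtain ⟨⟨a, t1, t2⟩, hm, hn⟩ := hmust _ (Or.inl ⟨N1, hN1, rfl⟩)
      exact ⟨(a, t1), ⟨t2, hm⟩, hn.1⟩
    · exact (congrArg Set.Finite (hpi2 M)).mpr (hfin.image _)
    · rintro ⟨a, t2⟩ ⟨s1, hm⟩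
      exact (hmay _ hm).2
    · intro N2 hN2
      obtain ⟨⟨a, t1, t2⟩, hm, hn⟩ := hmust _ (Or.inr ⟨N2, hN2, rfl⟩)
      exact ⟨(a, t2), ⟨t1, hm⟩, hn.1⟩
  · rintro ⟨hfin, ⟨hf1, hmay1, hmust1⟩, hf2, hmay2, hmust2⟩
    refine ⟨hfin, ?_, ?_⟩
    · rintro ⟨a, t1, t2⟩ hm
      exact ⟨hmay1 (a, t1) ⟨t2, hm⟩, hmay2 (a, t2) ⟨t1, hm⟩⟩
    · rintro N (⟨N1, hN1, rfl⟩ | ⟨N2, hN2, rfl⟩)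
      · obtain ⟨⟨a, t1⟩, ⟨t2, hm⟩, hn⟩ := hmust1 N1 hN1
        exact ⟨(a, t1, t2), hm,
          ⟨hn, hmay1 (a, t1) ⟨t2, hm⟩, hmay2 (a, t2) ⟨t1, hm⟩⟩⟩
      · obtain ⟨⟨a, t2⟩, ⟨t1, hm⟩, hn⟩ := hmust2 N2 hN2
        exact ⟨(a, t1, t2), hm,
          ⟨hn, hmay1 (a, t1) ⟨t2, hm⟩, hmay2 (a, t2) ⟨t1, hm⟩⟩⟩
end

section
/- For all NAA S₁, S₂, S₃ over Σ: ⟦S₁ ∧ S₂⟧ = ⟦S₁⟧ ∩ ⟦S₂⟧, and moreover S₁ ≤ₘ S₂ ∧ S₃ if and only if S₁ ≤ₘ S₂ and S₁ ≤ₘ S₃, where the conjunction of NAA (S₁, S⁰₁, Tran₁) and (S₂, S⁰₂, Tran₂) is S₁ ∧ S₂ = (S₁ × S₂, S⁰₁ × S⁰₂, Tran) with Tran((s₁, s₂)) = { M ⊆ Σ × S₁ × S₂ | π₁(M) ∈ Tran₁(s₁), π₂(M) ∈ Tran₂(s₂) }, π₁(M) = {(a, s₁) | ∃s₂: (a, s₁,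 s₂) ∈ M} and π₂(M) = {(a, s₂) | ∃s₁: (a, s₁, s₂) ∈ M}. -/
lemma refines_trans {A : Type} {T1 T2 T3 : NAA A} (h12 : T1.Refines T2) (h23 : T2.Refines T3) :
    T1.Refines T3 := by
  obtain ⟨R, hR, hRi⟩ := h12
  obtain ⟨Q, hQ, hQi⟩ := h23
  refine ⟨{p | ∃ t, (p.1, t) ∈ R ∧ (t, p.2) ∈ Q}, ?_, ?_⟩
  · rintro ⟨s1, s3⟩ ⟨t, hst, hts⟩ M1 hM1
    obtain ⟨M2, hM2, f12, b12⟩ := hR (s1, t) hst M1 hM1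
    obtain ⟨M3, hM3, f23, b23⟩ := hQ (t, s3) hts M2 hM2
    refine ⟨M3, hM3, ?_, ?_⟩
    · intro q hq
      obtain ⟨r, hr, he, hqr⟩ := f12 q hq
      obtain ⟨r', hr', he', hrr'⟩ := f23 r hr
      exact ⟨r', hr', he.trans he', r.2, hqr, hrr'⟩
    · intro r hr
      obtain ⟨q, hq, he, hqr⟩ := b23 r hr
      obtain ⟨q', hq', he', hq'q⟩ := b12 q hq
      exact ⟨q', hq', he'.trans he, q.2, hq'q, hqr⟩
  · intro s hs
    obtain ⟨t, ht, hst⟩ := hRi s hs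
    obtain ⟨u, hu, htu⟩ := hQi t ht
    exact ⟨u, hu, t, hst, htu⟩

lemma conj_refines_left {A : Type} (T1 T2 : NAA A) : (T1.conj T2).Refines T1 := by
  refine ⟨{p | p.1.1 = p.2}, ?_, ?_⟩
  · rintro ⟨⟨t, u⟩, t'⟩ (h : t = t') M ⟨hfin, hp1, hp2⟩
    subst h
    refine ⟨NAA.pi1 M, hp1, ?_, ?_⟩
    · rintro ⟨a, t', u'⟩ hq
      exact ⟨(a, t'), ⟨u', hq⟩, rfl, rfl⟩
    · rintro ⟨a, t'⟩ ⟨u', hu'⟩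
      exact ⟨(a, (t', u')), hu', rfl, rfl⟩
  · rintro ⟨t, u⟩ ⟨ht, hu⟩
    exact ⟨t, ht, rfl⟩

lemma conj_refines_right {A : Type} (T1 T2 : NAA A) : (T1.conj T2).Refines T2 := by
  refine ⟨{p | p.1.2 = p.2}, ?_, ?_⟩
  · rintro ⟨⟨t, u⟩, u'⟩ (h : u = u') M ⟨hfin, hp1, hp2⟩
    subst h
    refine ⟨NAA.pi2 M, hp2, ?_, ?_⟩
    · rintro ⟨a, t', u'⟩ hq
      exact ⟨(a, u'), ⟨t', hq⟩, rfl, rfl⟩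
    · rintro ⟨a, u'⟩ ⟨t', ht'⟩
      exact ⟨(a, (t', u')), ht', rfl, rfl⟩
  · rintro ⟨t, u⟩ ⟨ht, hu⟩
    exact ⟨u, hu, rfl⟩

lemma refines_conj {A : Type} {T1 T2 T3 : NAA A} (h2 : T2.Wellformed) (h3 : T3.Wellformed)
    (r2 : T1.Refines T2) (r3 : T1.Refines T3) : T1.Refines (T2.conj T3) := by
  obtain ⟨R2, hR2, hi2⟩ := r2
  obtain ⟨R3, hR3, hi3⟩ := r3
  refine ⟨{p | (p.1, p.2.1) ∈ R2 ∧ (p.1, p.2.2) ∈ R3}, ?_, ?_⟩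
  · rintro ⟨s, t, u⟩ ⟨hst, hsu⟩ M1 hM1
    obtain ⟨M2, hM2, f2, b2⟩ := hR2 (s, t) hst M1 hM1
    obtain ⟨M3, hM3, f3, b3⟩ := hR3 (s, u) hsu M1 hM1
    set M : Set (A × (T2.State × T3.State)) :=
      {q | ∃ s', (q.1, s') ∈ M1 ∧ (q.1, q.2.1) ∈ M2 ∧ (s', q.2.1) ∈ R2 ∧
        (q.1, q.2.2) ∈ M3 ∧ (s', q.2.2) ∈ R3} with hMdef
    have hpi1 : NAA.pi1 M = M2 := by
      ext ⟨a, t'⟩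
      constructor
      · rintro ⟨u', s', _, h2', _⟩
        exact h2'
      · intro hr
        obtain ⟨⟨b, s'⟩, hq, he, hqR⟩ := b2 (a, t') hr
        obtain rfl : a = b := he.symm
        obtain ⟨⟨c, u'⟩, hr', he', hr'R⟩ := f3 (a, s') hq
        obtain rfl : a = c := he'
        exact ⟨u', s', hq, hr, hqR, hr', hr'R⟩
    have hpi2 : NAA.pi2 M = M3 := by
      ext ⟨a, u'⟩
      constructor
      · rintro ⟨t', s', _, _, _, h3', _⟩
        exact h3'
      · intro hr
        obtain ⟨⟨b, s'⟩, hq, he, hqR⟩ := b3 (a, u') hr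
        obtain rfl : a = b := he.symm
        obtain ⟨⟨c, t'⟩, hr', he', hr'R⟩ := f2 (a, s') hq
        obtain rfl : a = c := he'
        exact ⟨t', s', hq, hr', hr'R, hr, hqR⟩
    have hfin : M.Finite := by
      have hM2f := h2.2 t M2 hM2
      have hM3f := h3.2 u M3 hM3
      refine Set.Finite.subset ((hM2f.prod hM3f).image
        (fun p : (A × T2.State) × (A × T3.State) => (p.1.1, (p.1.2, p.2.2)))) ?_
      rintro ⟨a, t', u'⟩ ⟨s', _, ha2, _, ha3, _⟩
      exact ⟨((a, t'), (a, u')), ⟨ha2, ha3⟩, rfl⟩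
    refine ⟨M, ⟨hfin, by rw [hpi1]; exact hM2, by rw [hpi2]; exact hM3⟩, ?_, ?_⟩
    · rintro ⟨a, s'⟩ hq
      obtain ⟨⟨b, t'⟩, hr2', he2, hR2'⟩ := f2 (a, s') hq
      obtain rfl : a = b := he2
      obtain ⟨⟨c, u'⟩, hr3', he3, hR3'⟩ := f3 (a, s') hq
      obtain rfl : a = c := he3
      exact ⟨(a, (t', u')), ⟨s', hq, hr2', hR2', hr3', hR3'⟩, rfl, hR2', hR3'⟩
    · rintro ⟨a, t', u'⟩ ⟨s', hs', _, hR2', _, hR3'⟩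
      exact ⟨(a, s'), hs', rfl, hR2', hR3'⟩
  · intro s hs
    obtain ⟨t, ht, hst⟩ := hi2 s hs
    obtain ⟨u, hu, hsu⟩ := hi3 s hs
    exact ⟨(t, u), ⟨ht, hu⟩, hst, hsu⟩

/-- the implementations of a conjunction of NAA are the
intersection of the implementations, and conjunction is the greatest lower
bound with respect to modal refinement. -/
theorem statement11 (A : Type) [Fintype A] (S1 S2 S3 : NAA A)
    (h1 : S1.Wellformed) (h2 : S2.Wellformed) (h3 : S3.Wellformed) :
    (S1.conj S2).impl = S1.impl ∩ S2.impl ∧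
    (S1.Refines (S2.conj S3) ↔ S1.Refines S2 ∧ S1.Refines S3) := by
  constructor
  · ext I
    constructor
    · intro h
      exact ⟨refines_trans h (conj_refines_left S1 S2), refines_trans h (conj_refines_right S1 S2)⟩
    · rintro ⟨ha, hb⟩
      exact refines_conj h1 h2 ha hb
  · constructor
    · intro h
      exact ⟨refines_trans h (conj_refines_left S2 S3), refines_trans h (conj_refines_right S2 S3)⟩
    · rintro ⟨ha, hb⟩
      exact refines_conj h2 h3 ha hb
end

section
/- For all DMTS S₁, S₂, S₃ over Σ: ⟦S₁ ∧ S₂⟧ = ⟦S₁⟧ ∩ ⟦S₂⟧, and moreover S₁ ≤ₘ S₂ ∧ S₃ if and only if S₁ ≤ₘ S₂ and S₁ ≤ₘ S₃, where ∧ is the DMTS conjunction. -/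
theorem refines_conj_iff {A : Type} (S1 S2 S3 : DMTS A)
    (h1 : ∀ s, ∀ N ∈ S1.must s, ∀ p ∈ N, p.2 ∈ S1.may s p.1)
    (h2 : ∀ s, ∀ N ∈ S2.must s, ∀ p ∈ N, p.2 ∈ S2.may s p.1)
    (h3 : ∀ s, ∀ N ∈ S3.must s, ∀ p ∈ N, p.2 ∈ S3.may s p.1) :
    S1.Refines (S2.conj S3) ↔ S1.Refines S2 ∧ S1.Refines S3 := by
  constructor
  · rintro ⟨R, hR, hinit⟩
    constructor
    · refine ⟨{p | ∃ v, (p.1, (p.2, v)) ∈ R}, ?_, ?_⟩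
      · rintro ⟨s, u⟩ ⟨v, hsuv⟩
        obtain ⟨hmay, hmust⟩ := hR _ hsuv
        constructor
        · intro a t1 ht1
          obtain ⟨t, ht, htR⟩ := hmay a t1 ht1
          exact ⟨t.1, ht.1, t.2, htR⟩
        · intro N2 hN2
          obtain ⟨N1, hN1, hprop⟩ := hmust
            {q | (q.1, q.2.1) ∈ N2 ∧ q.2.1 ∈ S2.may u q.1 ∧ q.2.2 ∈ S3.may v q.1}
            (Or.inl ⟨N2, hN2, rfl⟩)
          refine ⟨N1, hN1, ?_⟩
          intro q hq
          obtain ⟨t, htN, htR⟩ := hprop q hq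
          exact ⟨t.1, htN.1, t.2, htR⟩
      · intro s hs
        obtain ⟨t, ht, htR⟩ := hinit s hs
        exact ⟨t.1, ht.1, t.2, htR⟩
    · refine ⟨{p | ∃ u, (p.1, (u, p.2)) ∈ R}, ?_, ?_⟩
      · rintro ⟨s, v⟩ ⟨u, hsuv⟩
        obtain ⟨hmay, hmust⟩ := hR _ hsuv
        constructor
        · intro a t1 ht1
          obtain ⟨t, ht, htR⟩ := hmay a t1 ht1
          exact ⟨t.2, ht.2, t.1, htR⟩
        · intro N3 hN3
          obtain ⟨N1, hN1, hprop⟩ := hmust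
            {q | (q.1, q.2.2) ∈ N3 ∧ q.2.1 ∈ S2.may u q.1 ∧ q.2.2 ∈ S3.may v q.1}
            (Or.inr ⟨N3, hN3, rfl⟩)
          refine ⟨N1, hN1, ?_⟩
          intro q hq
          obtain ⟨t, htN, htR⟩ := hprop q hq
          exact ⟨t.2, htN.1, t.1, htR⟩
      · intro s hs
        obtain ⟨t, ht, htR⟩ := hinit s hs
        exact ⟨t.2, ht.2, t.1, htR⟩
  · rintro ⟨⟨R2, hR2, hi2⟩, ⟨R3, hR3, hi3⟩⟩
    refine ⟨{p | (p.1, p.2.1) ∈ R2 ∧ (p.1, p.2.2) ∈ R3}, ?_, ?_⟩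
    · rintro ⟨s, u, v⟩ ⟨hsu, hsv⟩
      obtain ⟨hmay2, hmust2⟩ := hR2 _ hsu
      obtain ⟨hmay3, hmust3⟩ := hR3 _ hsv
      constructor
      · intro a t1 ht1
        obtain ⟨t2, ht2, hr2⟩ := hmay2 a t1 ht1
        obtain ⟨t3, ht3, hr3⟩ := hmay3 a t1 ht1
        exact ⟨(t2, t3), ⟨ht2, ht3⟩, hr2, hr3⟩
      · rintro N (⟨N2, hN2, rfl⟩ | ⟨N3, hN3, rfl⟩)
        · obtain ⟨N1, hN1, hprop⟩ := hmust2 N2 hN2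
          refine ⟨N1, hN1, ?_⟩
          intro q hq
          obtain ⟨t2, ht2N, ht2R⟩ := hprop q hq
          have hqmay : q.2 ∈ S1.may s q.1 := h1 s N1 hN1 q hq
          obtain ⟨t3, ht3, hr3⟩ := hmay3 q.1 q.2 hqmay
          exact ⟨(t2, t3), ⟨ht2N, h2 u N2 hN2 _ ht2N, ht3⟩, ht2R, hr3⟩
        · obtain ⟨N1, hN1, hprop⟩ := hmust3 N3 hN3
          refine ⟨N1, hN1, ?_⟩
          intro q hq
          obtain ⟨t3, ht3N, ht3R⟩ := hprop q hq
          have hqmay : q.2 ∈ S1.may s q.1 := h1 s N1 hN1 q hq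
          obtain ⟨t2, ht2, hr2⟩ := hmay2 q.1 q.2 hqmay
          exact ⟨(t2, t3), ⟨ht3N, ht2, h3 v N3 hN3 _ ht3N⟩, hr2, ht3R⟩
    · intro s hs
      obtain ⟨u, hu, hru⟩ := hi2 s hs
      obtain ⟨v, hv, hrv⟩ := hi3 s hs
      exact ⟨(u, v), ⟨hu, hv⟩, hru, hrv⟩

theorem toDMTS_must_may {A : Type} (I : LTS A) :
    ∀ s, ∀ N ∈ I.toDMTS.must s, ∀ p ∈ N, p.2 ∈ I.toDMTS.may s p.1 := by
  rintro s N ⟨a, t, ht, rfl⟩ p hp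
  replace hp : p = (a, t) := hp
  subst hp
  exact ht

/-- the implementations of a conjunction of DMTS are the
intersection of the implementations, and conjunction is the greatest lower
bound with respect to modal refinement. -/
theorem statement12 (A : Type) [Fintype A] (S1 S2 S3 : DMTS A)
    (h1 : S1.Wellformed) (h2 : S2.Wellformed) (h3 : S3.Wellformed) :
    (S1.conj S2).impl = S1.impl ∩ S2.impl ∧
    (S1.Refines (S2.conj S3) ↔ S1.Refines S2 ∧ S1.Refines S3) := by
  constructor
  · ext I
    exact refines_conj_iff I.toDMTS S1 S2 (toDMTS_must_may I) h1.2.2 h2.2.2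
  · exact refines_conj_iff S1 S2 S3 h1.2.2 h2.2.2 h3.2.2
end

section
/- Up to modal-refinement equivalence ≡ₘ, the structural composition ‖ on NAA is associative and commutative, distributes over disjunction (S₁ ‖ (S₂ ∨ S₃) ≡ₘ (S₁ ‖ S₂) ∨ (S₁ ‖ S₃)), and has as unit the LTS U = ({u}, {u}, TranU) with TranU(u) = { Σ × {u} } (i.e. u has a must a-loop for every a ∈ Σ): S ‖ U ≡ₘ S for every NAA S. -/
/-- Structural (CSP-style) composition of two NAA:
`Tran (s1, s2) = { M1 ‖ M2 | M1 ∈ Tran1 s1, M2 ∈ Tran2 s2 }`, where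
`M1 ‖ M2 = {(a, (t1, t2)) | (a, t1) ∈ M1, (a, t2) ∈ M2}`. -/
def NAA.comp {A : Type} (S1 S2 : NAA A) : NAA A where
  State := S1.State × S2.State
  init := S1.init ×ˢ S2.init
  Tran := fun s => {M | ∃ M1 ∈ S1.Tran s.1, ∃ M2 ∈ S2.Tran s.2,
    M = {q : A × (S1.State × S2.State) | (q.1, q.2.1) ∈ M1 ∧ (q.1, q.2.2) ∈ M2}}

/-- The unit `U` for structural composition: a single state with a must
`a`-loop for every `a ∈ Σ`, i.e. `Tran u = { Σ × {u} }`. -/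
def NAA.unit (A : Type) : NAA A where
  State := Unit
  init := {Unit.unit}
  Tran := fun _ => {M | M = Set.univ}


section AuxiliaryLemmas

lemma NAA.equiv_of_equiv {A : Type} (S1 S2 : NAA A) (e : S1.State ≃ S2.State)
    (hinit : ∀ s, s ∈ S1.init ↔ e s ∈ S2.init)
    (htran : ∀ s M, M ∈ S1.Tran s ↔
      ((Equiv.prodCongr (Equiv.refl A) e) '' M) ∈ S2.Tran (e s)) :
    NAA.Equiv S1 S2 := by
  set E := Equiv.prodCongr (Equiv.refl A) e with hE
  constructor
  · refine ⟨{p | p.2 = e p.1}, ?_, ?_⟩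
    · rintro ⟨s, t⟩ (rfl : t = e s) M1 hM1
      refine ⟨E '' M1, (htran s M1).1 hM1, ?_, ?_⟩
      · rintro q hq
        exact ⟨E q, Set.mem_image_of_mem _ hq, rfl, rfl⟩
      · rintro r ⟨q, hq, rfl⟩
        exact ⟨q, hq, rfl, rfl⟩
    · intro s hs
      exact ⟨e s, (hinit s).1 hs, rfl⟩
  · refine ⟨{p | p.1 = e p.2}, ?_, ?_⟩
    · rintro ⟨t, s⟩ (rfl : t = e s) M2 hM2
      refine ⟨E.symm '' M2, ?_, ?_, ?_⟩
      · rw [htran, Equiv.image_symm_image]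
        exact hM2
      · rintro q hq
        refine ⟨E.symm q, Set.mem_image_of_mem _ hq, rfl, ?_⟩
        show q.2 = e (e.symm q.2); simp
      · rintro r ⟨q, hq, rfl⟩
        refine ⟨q, hq, rfl, ?_⟩
        show q.2 = e (e.symm q.2); simp
    · intro t ht
      exact ⟨e.symm t, (hinit _).2 (by simpa using ht), by simp⟩

lemma NAA.image_eq_iff {α β : Type} (e : α ≃ β) (s : Set α) (t : Set β) :
    e '' s = t ↔ s = e ⁻¹' t := by
  constructor
  · rintro rfl; ext x; simp
  · rintro rfl; exact e.image_preimage t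

lemma NAA.assocE {A : Type} (S1 S2 S3 : NAA A) :
    NAA.Equiv ((S1.comp S2).comp S3) (S1.comp (S2.comp S3)) := by
  refine NAA.equiv_of_equiv _ _ (Equiv.prodAssoc _ _ _) ?_ ?_
  · rintro ⟨⟨s1, s2⟩, s3⟩
    exact ⟨fun h => ⟨h.1.1, h.1.2, h.2⟩, fun h => ⟨⟨h.1, h.2.1⟩, h.2.2⟩⟩
  · rintro ⟨⟨s1, s2⟩, s3⟩ M
    constructor
    · rintro ⟨M12, ⟨M1, hM1, M2, hM2, rfl⟩, M3, hM3, rfl⟩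
      refine ⟨M1, hM1, {q | (q.1, q.2.1) ∈ M2 ∧ (q.1, q.2.2) ∈ M3},
        ⟨M2, hM2, M3, hM3, rfl⟩, ?_⟩
      refine (NAA.image_eq_iff _ _ _).2 ?_
      ext ⟨a, ⟨⟨t1, t2⟩, t3⟩⟩
      exact ⟨fun h => ⟨h.1.1, h.1.2, h.2⟩, fun h => ⟨⟨h.1, h.2.1⟩, h.2.2⟩⟩
    · rintro ⟨M1, hM1, M23, ⟨M2, hM2, M3, hM3, rfl⟩, himg⟩
      replace himg := (NAA.image_eq_iff _ _ _).1 himg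
      subst himg
      refine ⟨{q | (q.1, q.2.1) ∈ M1 ∧ (q.1, q.2.2) ∈ M2},
        ⟨M1, hM1, M2, hM2, rfl⟩, M3, hM3, ?_⟩
      ext ⟨a, ⟨⟨t1, t2⟩, t3⟩⟩
      exact ⟨fun h => ⟨⟨h.1, h.2.1⟩, h.2.2⟩, fun h => ⟨h.1.1, h.1.2, h.2⟩⟩

lemma NAA.commE {A : Type} (S1 S2 : NAA A) :
    NAA.Equiv (S1.comp S2) (S2.comp S1) := by
  refine NAA.equiv_of_equiv _ _ (Equiv.prodComm _ _) ?_ ?_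
  · rintro ⟨s1, s2⟩
    exact ⟨fun h => ⟨h.2, h.1⟩, fun h => ⟨h.2, h.1⟩⟩
  · rintro ⟨s1, s2⟩ M
    constructor
    · rintro ⟨M1, hM1, M2, hM2, rfl⟩
      refine ⟨M2, hM2, M1, hM1, ?_⟩
      refine (NAA.image_eq_iff _ _ _).2 ?_
      ext ⟨a, ⟨t1, t2⟩⟩
      exact ⟨fun h => ⟨h.2, h.1⟩, fun h => ⟨h.2, h.1⟩⟩
    · rintro ⟨M2, hM2, M1, hM1, himg⟩
      replace himg := (NAA.image_eq_iff _ _ _).1 himg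
      subst himg
      refine ⟨M1, hM1, M2, hM2, ?_⟩
      ext ⟨a, ⟨t1, t2⟩⟩
      exact ⟨fun h => ⟨h.2, h.1⟩, fun h => ⟨h.2, h.1⟩⟩

/-- The canonical bijection between the state spaces of `S1 ‖ (S2 ∨ S3)` and
`(S1 ‖ S2) ∨ (S1 ‖ S3)`, defined by pattern matching so that it reduces
definitionally on constructors. -/
def NAA.pdEquiv {A : Type} (S1 S2 S3 : NAA A) :
    (S1.comp (S2.disj S3)).State ≃ ((S1.comp S2).disj (S1.comp S3)).State where
  toFun p := match p with
    | (s1, Sum.inl s2) => Sum.inl (s1, s2)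
    | (s1, Sum.inr s3) => Sum.inr (s1, s3)
  invFun x := match x with
    | Sum.inl (s1, s2) => (s1, Sum.inl s2)
    | Sum.inr (s1, s3) => (s1, Sum.inr s3)
  left_inv := by rintro ⟨s1, s2 | s3⟩ <;> rfl
  right_inv := by rintro (⟨s1, s2⟩ | ⟨s1, s3⟩) <;> rfl


lemma NAA.dist_set_eq_left {A : Type} (S1 S2 S3 : NAA A)
    (M1 : Set (A × S1.State)) (M2 : Set (A × S2.State)) :
    {q : A × (S1.comp (S2.disj S3)).State | (q.1, q.2.1) ∈ M1 ∧
        (q.1, q.2.2) ∈ (fun p : A × S2.State =>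
          ((p.1, Sum.inl p.2) : A × (S2.State ⊕ S3.State))) '' M2} =
      (Equiv.prodCongr (Equiv.refl A) (NAA.pdEquiv S1 S2 S3)) ⁻¹'
        ((fun p : A × (S1.comp S2).State =>
          ((p.1, Sum.inl p.2) : A × ((S1.comp S2).State ⊕ (S1.comp S3).State))) ''
          {q : A × (S1.comp S2).State | (q.1, q.2.1) ∈ M1 ∧ (q.1, q.2.2) ∈ M2}) := by
  ext ⟨a, t1, u⟩
  rcases u with t2 | t3
  · constructor
    · rintro ⟨h1, ⟨⟨b, t2'⟩, h2, heq⟩⟩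
      have hb : b = a := congrArg Prod.fst heq
      have ht : t2' = t2 := Sum.inl.inj (congrArg Prod.snd heq)
      rw [hb, ht] at h2
      exact ⟨(a, (t1, t2)), ⟨h1, h2⟩, rfl⟩
    · rintro ⟨⟨b, u1, u2⟩, ⟨hh1, hh2⟩, heq⟩
      have h2 : (Sum.inl (u1, u2) : (S1.comp S2).State ⊕ (S1.comp S3).State)
          = Sum.inl (t1, t2) := congrArg Prod.snd heq
      have hb : b = a := congrArg Prod.fst heq
      have hu1 : u1 = t1 := congrArg Prod.fst (Sum.inl.inj h2)
      have hu2 : u2 = t2 := congrArg Prod.snd (Sum.inl.inj h2)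
      rw [hb, hu1] at hh1
      rw [hb, hu2] at hh2
      exact ⟨hh1, ⟨(a, t2), hh2, rfl⟩⟩
  · constructor
    · rintro ⟨h1, ⟨⟨b, t2'⟩, h2, heq⟩⟩
      exact (Sum.inl_ne_inr
        (show (Sum.inl t2' : S2.State ⊕ S3.State) = Sum.inr t3 from congrArg Prod.snd heq)).elim
    · rintro ⟨⟨b, u1, u2⟩, _, heq⟩
      exact (Sum.inl_ne_inr
        (show (Sum.inl (u1, u2) : (S1.comp S2).State ⊕ (S1.comp S3).State)
          = Sum.inr (t1, t3) from congrArg Prod.snd heq)).elim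

lemma NAA.dist_set_eq_right {A : Type} (S1 S2 S3 : NAA A)
    (M1 : Set (A × S1.State)) (M3 : Set (A × S3.State)) :
    {q : A × (S1.comp (S2.disj S3)).State | (q.1, q.2.1) ∈ M1 ∧
        (q.1, q.2.2) ∈ (fun p : A × S3.State =>
          ((p.1, Sum.inr p.2) : A × (S2.State ⊕ S3.State))) '' M3} =
      (Equiv.prodCongr (Equiv.refl A) (NAA.pdEquiv S1 S2 S3)) ⁻¹'
        ((fun p : A × (S1.comp S3).State =>
          ((p.1, Sum.inr p.2) : A × ((S1.comp S2).State ⊕ (S1.comp S3).State))) ''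
          {q : A × (S1.comp S3).State | (q.1, q.2.1) ∈ M1 ∧ (q.1, q.2.2) ∈ M3}) := by
  ext ⟨a, t1, u⟩
  rcases u with t2 | t3
  · constructor
    · rintro ⟨h1, ⟨⟨b, t3'⟩, h2, heq⟩⟩
      exact (Sum.inr_ne_inl
        (show (Sum.inr t3' : S2.State ⊕ S3.State) = Sum.inl t2 from congrArg Prod.snd heq)).elim
    · rintro ⟨⟨b, u1, u2⟩, _, heq⟩
      exact (Sum.inr_ne_inl
        (show (Sum.inr (u1, u2) : (S1.comp S2).State ⊕ (S1.comp S3).State)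
          = Sum.inl (t1, t2) from congrArg Prod.snd heq)).elim
  · constructor
    · rintro ⟨h1, ⟨⟨b, t3'⟩, h2, heq⟩⟩
      have hb : b = a := congrArg Prod.fst heq
      have ht : t3' = t3 := Sum.inr.inj (congrArg Prod.snd heq)
      rw [hb, ht] at h2
      exact ⟨(a, (t1, t3)), ⟨h1, h2⟩, rfl⟩
    · rintro ⟨⟨b, u1, u2⟩, ⟨hh1, hh2⟩, heq⟩
      have h2 : (Sum.inr (u1, u2) : (S1.comp S2).State ⊕ (S1.comp S3).State)
          = Sum.inr (t1, t3) := congrArg Prod.snd heq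
      have hb : b = a := congrArg Prod.fst heq
      have hu1 : u1 = t1 := congrArg Prod.fst (Sum.inr.inj h2)
      have hu2 : u2 = t3 := congrArg Prod.snd (Sum.inr.inj h2)
      rw [hb, hu1] at hh1
      rw [hb, hu2] at hh2
      exact ⟨hh1, ⟨(a, t3), hh2, rfl⟩⟩

lemma NAA.distE {A : Type} (S1 S2 S3 : NAA A) :
    NAA.Equiv (S1.comp (S2.disj S3)) ((S1.comp S2).disj (S1.comp S3)) := by
  refine NAA.equiv_of_equiv _ _ (NAA.pdEquiv S1 S2 S3) ?_ ?_
  · rintro ⟨s1, s2 | s3⟩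
    · show (s1, Sum.inl s2) ∈ _ ↔ Sum.inl (s1, s2) ∈ _
      constructor
      · rintro ⟨hs1, hs2⟩
        rcases hs2 with ⟨t2, ht2, heq⟩ | ⟨t3, ht3, heq⟩
        · have ht : t2 = s2 := Sum.inl.inj heq
          rw [ht] at ht2
          exact Or.inl ⟨(s1, s2), ⟨hs1, ht2⟩, rfl⟩
        · exact absurd heq (by simp)
      · rintro (⟨⟨t1, t2⟩, ⟨ht1, ht2⟩, heq⟩ | ⟨⟨t1, t3⟩, _, heq⟩)
        · have h1 : t1 = s1 := congrArg Prod.fst (Sum.inl.inj heq)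
          have h2 : t2 = s2 := congrArg Prod.snd (Sum.inl.inj heq)
          rw [h1] at ht1
          rw [h2] at ht2
          exact ⟨ht1, Or.inl ⟨s2, ht2, rfl⟩⟩
        · exact absurd heq (by simp)
    · show (s1, Sum.inr s3) ∈ _ ↔ Sum.inr (s1, s3) ∈ _
      constructor
      · rintro ⟨hs1, hs3⟩
        rcases hs3 with ⟨t2, ht2, heq⟩ | ⟨t3, ht3, heq⟩
        · exact absurd heq (by simp)
        · have ht : t3 = s3 := Sum.inr.inj heq
          rw [ht] at ht3
          exact Or.inr ⟨(s1, s3), ⟨hs1, ht3⟩, rfl⟩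
      · rintro (⟨⟨t1, t2⟩, _, heq⟩ | ⟨⟨t1, t3⟩, ⟨ht1, ht3⟩, heq⟩)
        · exact absurd heq (by simp)
        · have h1 : t1 = s1 := congrArg Prod.fst (Sum.inr.inj heq)
          have h2 : t3 = s3 := congrArg Prod.snd (Sum.inr.inj heq)
          rw [h1] at ht1
          rw [h2] at ht3
          exact ⟨ht1, Or.inr ⟨s3, ht3, rfl⟩⟩
  · rintro ⟨s1, s2 | s3⟩ M
    · show M ∈ _ ↔ _ ∈ ((S1.comp S2).disj (S1.comp S3)).Tran (Sum.inl (s1, s2))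
      constructor
      · rintro ⟨M1, hM1, Md, ⟨M2, hM2, rfl⟩, rfl⟩
        refine ⟨{q : A × (S1.comp S2).State | (q.1, q.2.1) ∈ M1 ∧ (q.1, q.2.2) ∈ M2},
          ⟨M1, hM1, M2, hM2, rfl⟩, ?_⟩
        refine (NAA.image_eq_iff _ _ _).2 ?_
        exact NAA.dist_set_eq_left S1 S2 S3 M1 M2
      · rintro ⟨Mc, ⟨M1, hM1, M2, hM2, rfl⟩, himg⟩
        replace himg := (NAA.image_eq_iff _ _ _).1 himg
        subst himg
        refine ⟨M1, hM1,
          (fun p : A × S2.State => ((p.1, Sum.inl p.2) :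
            A × (S2.State ⊕ S3.State))) '' M2, ⟨M2, hM2, rfl⟩, ?_⟩
        exact (NAA.dist_set_eq_left S1 S2 S3 M1 M2).symm
    · show M ∈ _ ↔ _ ∈ ((S1.comp S2).disj (S1.comp S3)).Tran (Sum.inr (s1, s3))
      constructor
      · rintro ⟨M1, hM1, Md, ⟨M3, hM3, rfl⟩, rfl⟩
        refine ⟨{q : A × (S1.comp S3).State | (q.1, q.2.1) ∈ M1 ∧ (q.1, q.2.2) ∈ M3},
          ⟨M1, hM1, M3, hM3, rfl⟩, ?_⟩
        refine (NAA.image_eq_iff _ _ _).2 ?_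
        exact NAA.dist_set_eq_right S1 S2 S3 M1 M3
      · rintro ⟨Mc, ⟨M1, hM1, M3, hM3, rfl⟩, himg⟩
        replace himg := (NAA.image_eq_iff _ _ _).1 himg
        subst himg
        refine ⟨M1, hM1,
          (fun p : A × S3.State => ((p.1, Sum.inr p.2) :
            A × (S2.State ⊕ S3.State))) '' M3, ⟨M3, hM3, rfl⟩, ?_⟩
        exact (NAA.dist_set_eq_right S1 S2 S3 M1 M3).symm

lemma NAA.unitE {A : Type} (S : NAA A) :
    NAA.Equiv (S.comp (NAA.unit A)) S := by
  refine NAA.equiv_of_equiv _ _ (Equiv.prodPUnit _) ?_ ?_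
  · rintro ⟨s, ⟨⟩⟩
    exact ⟨fun h => h.1, fun h => ⟨h, rfl⟩⟩
  · rintro ⟨s, ⟨⟩⟩ M
    constructor
    · rintro ⟨M1, hM1, M2, (rfl : M2 = Set.univ), rfl⟩
      have heq : (Equiv.prodCongr (Equiv.refl A) (Equiv.prodPUnit S.State)) ''
          {q : A × (S.comp (NAA.unit A)).State |
            (q.1, q.2.1) ∈ M1 ∧ (q.1, q.2.2) ∈ (Set.univ : Set (A × Unit))} = M1 := by
        rw [NAA.image_eq_iff]
        ext ⟨a, t, ⟨⟩⟩
        exact ⟨fun h => h.1, fun h => ⟨h, trivial⟩⟩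
      exact heq.symm ▸ hM1
    · intro hM1
      refine ⟨_, hM1, Set.univ, rfl, ?_⟩
      ext ⟨a, t, ⟨⟩⟩
      constructor
      · rintro h
        exact ⟨⟨(a, t, Unit.unit), h, rfl⟩, trivial⟩
      · rintro ⟨⟨⟨a', t', ⟨⟩⟩, h, heq⟩, -⟩
        obtain ⟨rfl, rfl⟩ : a' = a ∧ t' = t := by
          exact ⟨congrArg Prod.fst heq, congrArg Prod.snd heq⟩
        exact h

end AuxiliaryLemmas

/-- up to mutual modal refinement, structural composition of NAA
is associative and commutative, distributes over disjunction, and has the LTS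
`U` as unit. -/
theorem statement14 (A : Type) [Fintype A] (S1 S2 S3 S : NAA A)
    (h1 : S1.Wellformed) (h2 : S2.Wellformed) (h3 : S3.Wellformed)
    (hS : S.Wellformed) :
    NAA.Equiv ((S1.comp S2).comp S3) (S1.comp (S2.comp S3)) ∧
    NAA.Equiv (S1.comp S2) (S2.comp S1) ∧
    NAA.Equiv (S1.comp (S2.disj S3)) ((S1.comp S2).disj (S1.comp S3)) ∧
    NAA.Equiv (S.comp (NAA.unit A)) S := by
  exact ⟨NAA.assocE S1 S2 S3, NAA.commE S1 S2, NAA.distE S1 S2 S3, NAA.unitE S⟩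
end

section
/- Structural composition of NAA is monotone with respect to modal refinement: for all NAA S₁, S₂, S₃, S₄ over Σ, if S₁ ≤ₘ S₃ and S₂ ≤ₘ S₄ then S₁ ‖ S₂ ≤ₘ S₃ ‖ S₄. -/
/-- structural composition of NAA is monotone with respect to
modal refinement. -/
theorem statement15 (A : Type) [Fintype A] (S1 S2 S3 S4 : NAA A)
    (h1 : S1.Wellformed) (h2 : S2.Wellformed) (h3 : S3.Wellformed)
    (h4 : S4.Wellformed)
    (h13 : S1.Refines S3) (h24 : S2.Refines S4) :
    (S1.comp S2).Refines (S3.comp S4) := by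
  obtain ⟨R13, hR13, hI13⟩ := h13
  obtain ⟨R24, hR24, hI24⟩ := h24
  refine ⟨{p | (p.1.1, p.2.1) ∈ R13 ∧ (p.1.2, p.2.2) ∈ R24}, ?_, ?_⟩
  · rintro ⟨⟨s1, s2⟩, ⟨s3, s4⟩⟩ ⟨hp13, hp24⟩ M ⟨M1, hM1, M2, hM2, rfl⟩
    obtain ⟨M3, hM3, hf13, hb13⟩ := hR13 _ hp13 M1 hM1
    obtain ⟨M4, hM4, hf24, hb24⟩ := hR24 _ hp24 M2 hM2
    refine ⟨_, ⟨M3, hM3, M4, hM4, rfl⟩, ?_, ?_⟩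
    · rintro ⟨a, t1, t2⟩ ⟨h1', h2'⟩
      obtain ⟨⟨a3, t3⟩, ht3, he3, hr3⟩ := hf13 _ h1'
      obtain ⟨⟨a4, t4⟩, ht4, he4, hr4⟩ := hf24 _ h2'
      simp only at he3 he4
      subst he3; subst he4
      exact ⟨(a, t3, t4), ⟨ht3, ht4⟩, rfl, hr3, hr4⟩
    · rintro ⟨a, t3, t4⟩ ⟨h3', h4'⟩
      obtain ⟨⟨a1, t1⟩, ht1, he1, hr1⟩ := hb13 _ h3'
      obtain ⟨⟨a2, t2⟩, ht2, he2, hr2⟩ := hb24 _ h4'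
      simp only at he1 he2
      subst he1; subst he2
      exact ⟨(a2, t1, t2), ⟨ht1, ht2⟩, rfl, hr1, hr2⟩
  · rintro ⟨s1, s2⟩ ⟨hs1, hs2⟩
    obtain ⟨t3, ht3, hr3⟩ := hI13 s1 hs1
    obtain ⟨t4, ht4, hr4⟩ := hI24 s2 hs2
    exact ⟨(t3, t4), ⟨ht3, ht4⟩, hr3, hr4⟩
end

section
/- The MTS quotient is right adjoint to composition: for all MTS S, T and X over Σ, X ≤ₘ S / T if and only if T ‖ X ≤ₘ S, where S / T is the DMTS quotient construction for MTS and ‖ is the composition of MTS (the NAA composition under the standard translation). -/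
namespace DMTS

variable {A : Type}

/-- An MTS is a DMTS with a single initial state in which every must-set is a
singleton. -/
def IsMTS (S : DMTS A) : Prop :=
  (∃ s0, S.init = {s0}) ∧ ∀ s, ∀ N ∈ S.must s, ∃ a t, N = {(a, t)}

/-- Structural composition of MTS (the NAA composition under the standard
translation): may- and must-transitions are synchronised. -/
def mtsComp {A : Type} (T X : DMTS A) : DMTS A where
  State := T.State × X.State
  init := T.init ×ˢ X.init
  may := fun s a => (T.may s.1 a) ×ˢ (X.may s.2 a)
  must := fun s => {N | ∃ a t' x', {(a, t')} ∈ T.must s.1 ∧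
    {(a, x')} ∈ X.must s.2 ∧ N = {(a, (t', x'))}}

/-- `α(s)`: the actions enabled (as may-transitions) in `s`. -/
def alphaD (S : DMTS A) (s : S.State) : Set A := {a | ∃ t, t ∈ S.may s a}

/-- `γ(q) = ⋂_{(s,t) ∈ q} (α(s) ∪ (Σ ∖ α(t)))`. -/
def gammaD (S T : DMTS A) (q : Set (S.State × T.State)) : Set A :=
  {a | ∀ p ∈ q, a ∈ S.alphaD p.1 ∨ a ∉ T.alphaD p.2}

/-- `May_a(q)`: the possible next quotient states after an `a`-transition (for
`a ∈ γ(q)`), each obtained by combining the `a`-may-successors `t'` of the `tᵢ`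
with some choice of `a`-may-successors of the `sᵢ`. -/
def mayQ (S T : DMTS A) (a : A) (q : Set (S.State × T.State)) :
    Set (Set (S.State × T.State)) :=
  {r | a ∈ gammaD S T q ∧ r.Finite ∧
    ∃ f : S.State × T.State → T.State → S.State,
    (∀ p ∈ q, ∀ t' ∈ T.may p.2 a, f p t' ∈ S.may p.1 a) ∧
    r = {x | ∃ p ∈ q, ∃ t' ∈ T.may p.2 a, x = (f p t', t')}}

/-- The quotient `S / T` of two MTS, as a DMTS: states are the finite subsets
`q = {s₁/t₁, …, sₙ/tₙ}` of `S × T`, the single initial state is `{s⁰/t⁰}`, the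
empty state is universal (may-loops on all actions, no musts), the
may-transitions under `a` go to the elements of `May_a(q)`, and every must
`sᵢ →ᵃ s'` induces the disjunctive must-transition
`q ⟶ {(a, M) ∈ {a} × May_a(q) | ∃ t' : s'/t' ∈ M, tᵢ →ᵃ t'}`. -/
def mtsQuot (S T : DMTS A) : DMTS A where
  State := Set (S.State × T.State)
  init := { {p | p.1 ∈ S.init ∧ p.2 ∈ T.init} }
  may := fun q a => {r | (q = ∅ ∧ r = ∅) ∨ (q ≠ ∅ ∧ r ∈ mayQ S T a q)}
  must := fun q => {N | q ≠ ∅ ∧ ∃ p ∈ q, ∃ a s', {(a, s')} ∈ S.must p.1 ∧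
    N = {z : A × Set (S.State × T.State) | z.1 = a ∧ z.2 ∈ mayQ S T a q ∧
      ∃ t', (s', t') ∈ z.2 ∧ {(a, t')} ∈ T.must p.2}}

end DMTS

namespace DMTS

variable {A : Type}

@[reducible] instance instMemQuotState (S T : DMTS A) :
    Membership (S.State × T.State) (S.mtsQuot T).State :=
  Set.instMembership

@[reducible] instance instMemQuotMust (S T : DMTS A) :
    Membership (Set (A × Set (S.State × T.State)))
      (Set (Set (A × (S.mtsQuot T).State))) :=
  Set.instMembership

@[reducible] instance instMemQuotRel (S T X : DMTS A) :
    Membership (X.State × (S.mtsQuot T).State)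
      (Set (X.State × Set (S.State × T.State))) :=
  Set.instMembership

@[reducible] instance instEmptyQuotState (S T : DMTS A) :
    EmptyCollection (S.mtsQuot T).State :=
  Set.instEmptyCollection

end DMTS

/-- the MTS quotient is right adjoint to composition:
`X ≤ₘ S / T` iff `T ‖ X ≤ₘ S`, for all MTS `S`, `T`, `X`. -/
theorem statement17 (A : Type) [Fintype A] (S T X : DMTS A)
    (hSw : S.Wellformed) (hTw : T.Wellformed) (hXw : X.Wellformed)
    (hS : S.IsMTS) (hT : T.IsMTS) (hX : X.IsMTS) :
    X.Refines (S.mtsQuot T) ↔ (T.mtsComp X).Refines S := by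
  obtain ⟨⟨s0, hs0⟩, hSsing⟩ := hS
  obtain ⟨⟨t0, ht0⟩, hTsing⟩ := hT
  obtain ⟨⟨x0, hx0⟩, hXsing⟩ := hX
  classical
  constructor
  · rintro ⟨R, hR, hRinit⟩
    refine ⟨{p : (T.mtsComp X).State × S.State |
        ∃ q, (p.1.2, q) ∈ R ∧ (p.2, p.1.1) ∈ (q : Set (S.State × T.State))}, ?_, ?_⟩
    · rintro ⟨⟨t, x⟩, s⟩ ⟨q, hxq, hstq⟩
      dsimp only at hxq hstq
      constructor
      · rintro a ⟨t', x'⟩ ⟨ht', hx'⟩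
        obtain ⟨q', hq'may, hq'R⟩ := (hR _ hxq).1 a x' hx'
        dsimp only at hq'may
        rcases hq'may with ⟨hqe, _⟩ | ⟨hqne, hγ, hfin, f, hf, hq'eq⟩
        · exact absurd hqe (Set.nonempty_iff_ne_empty.1 ⟨_, hstq⟩)
        · refine ⟨f (s, t) t', hf (s, t) hstq t' ht', q', hq'R, ?_⟩
          rw [hq'eq]; exact ⟨(s, t), hstq, t', ht', rfl⟩
      · intro N hN
        obtain ⟨a, s', hNeq⟩ := hSsing s N hN
        have hqne : q ≠ ∅ := Set.nonempty_iff_ne_empty.1 ⟨_, hstq⟩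
        have hNQ : ({z : A × Set (S.State × T.State) | z.1 = a ∧
            z.2 ∈ DMTS.mayQ S T a q ∧
            ∃ t'', (s', t'') ∈ z.2 ∧ {(a, t'')} ∈ T.must t} : Set _)
            ∈ (S.mtsQuot T).must q :=
          ⟨hqne, (s, t), hstq, a, s', hNeq ▸ hN, rfl⟩
        obtain ⟨NX, hNX, hNXspec⟩ := (hR _ hxq).2 _ hNQ
        obtain ⟨b, x', hNXeq⟩ := hXsing x NX hNX
        obtain ⟨q', hq'NQ, hx'q'⟩ := hNXspec (b, x') (by rw [hNXeq]; rfl)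
        obtain ⟨hba, hq'may, t', hst'q', ht'must⟩ := hq'NQ
        simp only at hba
        have hba' := hba.symm
        subst hba'
        refine ⟨{(a, (t', x'))}, ⟨a, t', x', ht'must, hNXeq ▸ hNX, rfl⟩, ?_⟩
        rintro z hz
        replace hz : z = (a, (t', x')) := hz
        subst hz
        exact ⟨s', by rw [hNeq]; rfl, q', hx'q', hst'q'⟩
    · rintro ⟨t, x⟩ ⟨htI, hxI⟩
      obtain ⟨q, hqI, hxqR⟩ := hRinit x hxI
      have hqI' : q = {p : S.State × T.State | p.1 ∈ S.init ∧ p.2 ∈ T.init} := hqI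
      refine ⟨s0, by rw [hs0]; rfl, q, hxqR, ?_⟩
      rw [hqI']
      exact ⟨by rw [hs0]; rfl, htI⟩
  · rintro ⟨R', hR', hR'init⟩
    refine ⟨{p : X.State × Set (S.State × T.State) |
        p.2.Finite ∧ ∀ z ∈ p.2, ((z.2, p.1), z.1) ∈ R'}, ?_, ?_⟩
    · rintro ⟨x, q⟩ ⟨hqfin, hqR⟩
      constructor
      · intro a x' hx'
        by_cases hqe : q = ∅
        · exact ⟨∅, Or.inl ⟨hqe, rfl⟩, Set.finite_empty, fun z hz => (Set.notMem_empty z hz).elim⟩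
        · obtain ⟨⟨σ0, τ0⟩, hp0⟩ := Set.nonempty_iff_ne_empty.2 hqe
          have hNES : Nonempty S.State := ⟨σ0⟩
          have hex : ∀ p ∈ q, ∀ τ'' ∈ T.may p.2 a,
              ∃ σ', σ' ∈ S.may p.1 a ∧ ((τ'', x'), σ') ∈ R' := by
            intro p hp τ'' hτ''
            obtain ⟨σ', hσ', hσ'R⟩ := (hR' _ (hqR p hp)).1 a (τ'', x') ⟨hτ'', hx'⟩
            exact ⟨σ', hσ', hσ'R⟩
          set f : S.State × T.State → T.State → S.State := fun p τ'' =>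
            if h : ∃ σ', σ' ∈ S.may p.1 a ∧ ((τ'', x'), σ') ∈ R'
            then h.choose else Classical.arbitrary _ with hfdef
          have hfspec : ∀ p ∈ q, ∀ τ'' ∈ T.may p.2 a,
              f p τ'' ∈ S.may p.1 a ∧ ((τ'', x'), f p τ'') ∈ R' := by
            intro p hp τ'' hτ''
            have h := hex p hp τ'' hτ''
            rw [hfdef]
            simp only [dif_pos h]
            exact h.choose_spec
          set q' : Set (S.State × T.State) :=
            {z | ∃ p ∈ q, ∃ τ'' ∈ T.may p.2 a, z = (f p τ'', τ'')} with hq'def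
          have hq'fin : q'.Finite := by
            have heq : q' = ⋃ p ∈ q, (fun τ'' => (f p τ'', τ'')) '' (T.may p.2 a) := by
              ext z
              simp only [hq'def, Set.mem_setOf_eq, Set.mem_iUnion, Set.mem_image]
              constructor
              · rintro ⟨p, hp, τ'', hτ'', rfl⟩; exact ⟨p, hp, τ'', hτ'', rfl⟩
              · rintro ⟨p, hp, τ'', hτ'', rfl⟩; exact ⟨p, hp, τ'', hτ'', rfl⟩
            rw [heq]
            exact hqfin.biUnion fun p _ => (hTw.2.1 p.2 a).image _
          have hγ : a ∈ DMTS.gammaD S T q := by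
            intro p hp
            by_cases hα : a ∈ T.alphaD p.2
            · obtain ⟨τ'', hτ''⟩ := hα
              exact Or.inl ⟨f p τ'', (hfspec p hp τ'' hτ'').1⟩
            · exact Or.inr hα
          refine ⟨q', Or.inr ⟨hqe, hγ, hq'fin, f,
              fun p hp τ'' hτ'' => (hfspec p hp τ'' hτ'').1, rfl⟩, hq'fin, ?_⟩
          rintro z ⟨p, hp, τ'', hτ'', rfl⟩
          exact (hfspec p hp τ'' hτ'').2
      · rintro NQ ⟨hqne, ⟨s, t⟩, hstq, a, s', hmustS, hNQeq⟩
        obtain ⟨N1, hN1, hN1spec⟩ := (hR' _ (hqR _ hstq)).2 {(a, s')} hmustS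
        obtain ⟨b, t', x', hTmust, hXmust, hN1eq⟩ := hN1
        obtain ⟨s'', hs''mem, hR'tx⟩ := hN1spec (b, (t', x')) (by rw [hN1eq]; rfl)
        rw [Set.mem_singleton_iff, Prod.mk.injEq] at hs''mem
        obtain ⟨hba, hs''⟩ := hs''mem
        have hba' := hba.symm
        subst hba'
        have hs''' := hs''.symm
        subst hs'''
        have hs'may : s' ∈ S.may s a := hSw.2.2 s _ hmustS (a, s') rfl
        have ht'may : t' ∈ T.may t a := hTw.2.2 t _ hTmust (a, t') rfl
        have hx'may : x' ∈ X.may x a := hXw.2.2 x _ hXmust (a, x') rfl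
        obtain ⟨⟨σ0, τ0⟩, hp0⟩ := Set.nonempty_iff_ne_empty.2 hqne
        have hNES : Nonempty S.State := ⟨σ0⟩
        have hex : ∀ p ∈ q, ∀ τ'' ∈ T.may p.2 a,
            ∃ σ', σ' ∈ S.may p.1 a ∧ ((τ'', x'), σ') ∈ R' := by
          intro p hp τ'' hτ''
          obtain ⟨σ', hσ', hσ'R⟩ := (hR' _ (hqR p hp)).1 a (τ'', x') ⟨hτ'', hx'may⟩
          exact ⟨σ', hσ', hσ'R⟩
        set f : S.State × T.State → T.State → S.State := fun p τ'' =>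
          if p = (s, t) ∧ τ'' = t' then s'
          else if h : ∃ σ', σ' ∈ S.may p.1 a ∧ ((τ'', x'), σ') ∈ R'
            then h.choose else Classical.arbitrary _ with hfdef
        have hfspec : ∀ p ∈ q, ∀ τ'' ∈ T.may p.2 a,
            f p τ'' ∈ S.may p.1 a ∧ ((τ'', x'), f p τ'') ∈ R' := by
          intro p hp τ'' hτ''
          rw [hfdef]
          by_cases hc : p = (s, t) ∧ τ'' = t'
          · simp only [if_pos hc]
            rw [hc.1, hc.2]
            exact ⟨hs'may, hR'tx⟩
          · have h := hex p hp τ'' hτ''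
            simp only [if_neg hc, dif_pos h]
            exact h.choose_spec
        have hfst : f (s, t) t' = s' := by rw [hfdef]; simp
        set q' : Set (S.State × T.State) :=
          {z | ∃ p ∈ q, ∃ τ'' ∈ T.may p.2 a, z = (f p τ'', τ'')} with hq'def
        have hq'fin : q'.Finite := by
          have heq : q' = ⋃ p ∈ q, (fun τ'' => (f p τ'', τ'')) '' (T.may p.2 a) := by
            ext z
            simp only [hq'def, Set.mem_setOf_eq, Set.mem_iUnion, Set.mem_image]
            constructor
            · rintro ⟨p, hp, τ'', hτ'', rfl⟩; exact ⟨p, hp, τ'', hτ'', rfl⟩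
            · rintro ⟨p, hp, τ'', hτ'', rfl⟩; exact ⟨p, hp, τ'', hτ'', rfl⟩
          rw [heq]
          exact hqfin.biUnion fun p _ => (hTw.2.1 p.2 a).image _
        have hγ : a ∈ DMTS.gammaD S T q := by
          intro p hp
          by_cases hα : a ∈ T.alphaD p.2
          · obtain ⟨τ'', hτ''⟩ := hα
            exact Or.inl ⟨f p τ'', (hfspec p hp τ'' hτ'').1⟩
          · exact Or.inr hα
        have hq'may : q' ∈ DMTS.mayQ S T a q :=
          ⟨hγ, hq'fin, f, fun p hp τ'' hτ'' => (hfspec p hp τ'' hτ'').1, rfl⟩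
        have hs't'q' : (s', t') ∈ q' := by
          refine ⟨(s, t), hstq, t', ht'may, ?_⟩
          rw [hfst]
        refine ⟨{(a, x')}, hXmust, ?_⟩
        rintro z hz
        rw [Set.mem_singleton_iff] at hz
        subst hz
        refine ⟨q', ?_, hq'fin, ?_⟩
        · rw [hNQeq]
          exact ⟨rfl, hq'may, t', hs't'q', hTmust⟩
        · rintro z ⟨p, hp, τ'', hτ'', rfl⟩
          exact (hfspec p hp τ'' hτ'').2
    · intro x hxI
      refine ⟨{p | p.1 ∈ S.init ∧ p.2 ∈ T.init}, rfl, ?_, ?_⟩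
      · have heq : {p : S.State × T.State | p.1 ∈ S.init ∧ p.2 ∈ T.init}
            = S.init ×ˢ T.init := rfl
        rw [heq]
        exact hSw.1.prod hTw.1
      · rintro ⟨σ, τ⟩ ⟨hσI, hτI⟩
        obtain ⟨s'', hs''I, hs''R⟩ := hR'init (τ, x) ⟨hτI, hxI⟩
        rw [hs0, Set.mem_singleton_iff] at hs''I hσI
        rw [hσI, ← hs''I]
        exact hs''R
end

section
/- Every locally consistent NAA has at least one implementation: if S is an NAA such that Reach(S) ≠ ∅ and Tran(s) ≠ ∅ for every reachable state s, then ⟦S⟧ ≠ ∅. -/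
/-- The reachable states of an NAA: the least set containing the initial states
and closed under taking targets of admissible transitions. -/
inductive NAA.Reach {A : Type} (S : NAA A) : S.State → Prop
  | init (s : S.State) (h : s ∈ S.init) : NAA.Reach S s
  | step (s : S.State) (hs : NAA.Reach S s) (M : Set (A × S.State))
      (hM : M ∈ S.Tran s) (p : A × S.State) (hp : p ∈ M) : NAA.Reach S p.2

/-- every locally consistent NAA (some state is reachable, and
every reachable state has a nonempty set of admissible transition sets) has at
least one implementation. -/
theorem statement18 (A : Type) [Fintype A] (S : NAA A) (hw : S.Wellformed)
    (h1 : {s | S.Reach s}.Nonempty) (h2 : ∀ s, S.Reach s → (S.Tran s).Nonempty) :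
    S.impl.Nonempty := by
  obtain ⟨s0, hs0⟩ := h1
  have hinit : ∃ s, s ∈ S.init := by
    induction hs0 with
    | init s h => exact ⟨s, h⟩
    | step s hs M hM p hp ih => exact ih
  obtain ⟨i0, hi0⟩ := hinit
  choose M hM using h2
  have hreach0 : S.Reach i0 := NAA.Reach.init i0 hi0
  refine ⟨⟨{s : S.State // S.Reach s}, ⟨i0, hreach0⟩,
    fun t a => {u | (a, u.val) ∈ M t.val t.prop}, ?_⟩, ?_⟩
  · intro t a
    have hfin := hw.2 t.val (M t.val t.prop) (hM t.val t.prop)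
    have : {u : {s : S.State // S.Reach s} | (a, u.val) ∈ M t.val t.prop}
        = (fun u : {s : S.State // S.Reach s} => (a, u.val)) ⁻¹' (M t.val t.prop) := rfl
    show {u : {s : S.State // S.Reach s} | (a, u.val) ∈ M t.val t.prop}.Finite
    rw [this]
    exact hfin.preimage (fun u _ v _ h => Subtype.ext (by simpa using congrArg Prod.snd h))
  · refine ⟨{p | p.1.val = p.2}, ?_, ?_⟩
    · rintro ⟨t, s⟩ hts M1 hM1
      simp only [LTS.toNAA, Set.mem_setOf_eq] at hM1 hts
      replace hts : (t : {s : S.State // S.Reach s}).val = s := hts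
      subst hM1 hts
      refine ⟨M t.val t.prop, hM t.val t.prop, ?_, ?_⟩
      · rintro ⟨a, u⟩ hq
        exact ⟨(a, u.val), hq, rfl, rfl⟩
      · rintro ⟨a, u⟩ hr
        exact ⟨(a, ⟨u, NAA.Reach.step t.val t.prop _ (hM t.val t.prop) (a, u) hr⟩), hr, rfl, rfl⟩
    · intro s hs
      simp only [LTS.toNAA, Set.mem_singleton_iff] at hs
      subst hs
      exact ⟨i0, hi0, rfl⟩
end
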